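/- arXiv:math/0203116 — 6 statements merged into one kernel-verified Lean document; each statement's English description precedes it below -/
import Mathlib

section
/- Every finitely generated projective module over a (not necessarily commutative) principal ideal domain is free. -/
/-- Auxiliary: over a domain where every left ideal is principal, every submodule of
`Fin n → S` is free. -/
private lemma aux_submodule_free (S : Type*) [Ring S] [IsDomain S]
    (hp : ∀ I : Submodule S S, I.IsPrincipal) :
    ∀ n : ℕ, ∀ N : Submodule S (Fin n → S), Module.Free S N := by
  intro n
  induction n with
  | zero =>
    intro N
    have : Subsingleton N := by
      constructor
      rintro ⟨x, hx⟩ ⟨y, hy⟩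
      ext i
      exact absurd i.2 (by omega)
    exact Module.Free.of_subsingleton S N
  | succ n ih =>
    intro N
    -- projection onto the last coordinate, restricted to N
    set π : N →ₗ[S] S := (LinearMap.proj (Fin.last n)).comp N.subtype with hπ
    set I : Submodule S S := LinearMap.range π with hI
    -- I is free
    obtain ⟨a, ha⟩ := (hp I).principal
    have hIfree : Module.Free S I := by
      rcases eq_or_ne a 0 with rfl | ha0
      · have : I = ⊥ := by simp [ha]
        have : Subsingleton I := by rw [this]; infer_instance
        exact Module.Free.of_subsingleton S I
      · have hinj : Function.Injective (LinearMap.toSpanSingleton S S a) := by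
          intro x y hxy
          simp only [LinearMap.toSpanSingleton_apply, smul_eq_mul] at hxy
          exact mul_right_cancel₀ ha0 hxy
        have hrange : I = LinearMap.range (LinearMap.toSpanSingleton S S a) := by
          rw [ha, LinearMap.span_singleton_eq_range]
        exact Module.Free.of_equiv
          ((LinearEquiv.ofInjective _ hinj).trans (LinearEquiv.ofEq _ _ hrange.symm))
    have hIproj : Module.Projective S I := Module.Projective.of_free
    -- split the surjection N → I
    have hsurj : Function.Surjective π.rangeRestrict := LinearMap.surjective_rangeRestrict π
    obtain ⟨s, hs⟩ := Module.projective_lifting_property π.rangeRestrict LinearMap.id hsurj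
    have hs' : ∀ x : I, π.rangeRestrict (s x) = x := fun x => LinearMap.congr_fun hs x
    have hsinj : Function.Injective s := by
      intro x y hxy
      have := hs' x; rw [hxy, hs' y] at this; exact this.symm
    -- projection from N onto range s
    set f : N →ₗ[S] LinearMap.range s := s.rangeRestrict.comp π.rangeRestrict with hf
    have hproj : ∀ x : LinearMap.range s, f x = x := by
      rintro ⟨x, y, rfl⟩
      simp only [hf, LinearMap.comp_apply]
      ext
      simp [hs' y]
    have hcompl : IsCompl (LinearMap.range s) (LinearMap.ker f) :=
      LinearMap.isCompl_of_proj hproj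
    -- the kernel of f is free: it embeds into Fin n → S
    have hkerfree : Module.Free S (LinearMap.ker f) := by
      set g : (LinearMap.ker f : Submodule S N) →ₗ[S] (Fin n → S) :=
        (LinearMap.funLeft S S Fin.castSucc).comp
          (N.subtype.comp (LinearMap.ker f).subtype) with hg
      have key : ∀ z : N, z ∈ LinearMap.ker f → π z = 0 := by
        intro z hz
        have h1 : s.rangeRestrict (π.rangeRestrict z) = 0 := hz
        have hinj2 : Function.Injective s.rangeRestrict := fun a b hab =>
          hsinj (congrArg Subtype.val hab)
        have h2 : π.rangeRestrict z = 0 := hinj2 (by rw [map_zero]; exact h1)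
        simpa using congrArg Subtype.val h2
      have hginj : Function.Injective g := by
        rintro ⟨⟨x, hxN⟩, hxk⟩ ⟨⟨y, hyN⟩, hyk⟩ hxy
        have hxy' : ∀ i : Fin n, x (Fin.castSucc i) = y (Fin.castSucc i) := fun i =>
          congrFun hxy i
        have hxl : x (Fin.last n) = 0 := key _ hxk
        have hyl : y (Fin.last n) = 0 := key _ hyk
        refine Subtype.ext (Subtype.ext (funext fun i => ?_))
        exact Fin.lastCases (motive := fun i => x i = y i) (show x (Fin.last n) = y (Fin.last n) by rw [hxl, hyl]) hxy' i
      have := ih (LinearMap.range g)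
      exact Module.Free.of_equiv (LinearEquiv.ofInjective g hginj).symm
    -- N is the product of two free modules
    have hequiv := Submodule.prodEquivOfIsCompl _ _ hcompl
    have hrsfree : Module.Free S (LinearMap.range s) :=
      Module.Free.of_equiv (LinearEquiv.ofInjective s hsinj)
    exact Module.Free.of_equiv hequiv

theorem projective_module_over_noncommutative_pid_is_free
    (R : Type*) [Ring R] [IsDomain R]
    (hleft : ∀ I : Submodule R R, I.IsPrincipal)
    (hright : ∀ I : Submodule Rᵐᵒᵖ Rᵐᵒᵖ, I.IsPrincipal)
    (M : Type*) [AddCommGroup M] [Module Rᵐᵒᵖ M]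
    [Module.Finite Rᵐᵒᵖ M] [Module.Projective Rᵐᵒᵖ M] :
    Module.Free Rᵐᵒᵖ M := by
  obtain ⟨n, f, hf⟩ := Module.Finite.exists_fin' Rᵐᵒᵖ M
  obtain ⟨s, hs⟩ := Module.projective_lifting_property f LinearMap.id hf
  have hsinj : Function.Injective s := by
    intro x y hxy
    have hx : f (s x) = x := LinearMap.congr_fun hs x
    have hy : f (s y) = y := LinearMap.congr_fun hs y
    rw [← hx, ← hy, hxy]
  have := aux_submodule_free Rᵐᵒᵖ hright (n := n) (LinearMap.range s)
  exact Module.Free.of_equiv (LinearEquiv.ofInjective s hsinj).symm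
end

section
/- Let L/K be a finite Galois field extension with Galois group Γ. Then the smash product (crossed product) algebra L#Γ is a simple K-algebra. -/
/-!
STATEMENT 3: Let `L/K` be a finite Galois field extension with Galois group
`Γ = L ≃ₐ[K] L`.  Then the smash (crossed) product algebra `L#Γ` is a simple
`K`-algebra.

We axiomatize `L#Γ` as a `K`-algebra `A` containing `L` (via `i`), together
with units `u γ` for `γ ∈ Γ` implementing the Galois action by conjugation,
multiplying according to the group law, and forming an `L`-basis of `A`
(so `A = ⊕_{γ} L·u(γ)`, with multiplication
`(a·u γ)(b·u δ) = a·γ(b)·u (γδ)`, i.e. the crossed product structure).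
The conclusion is that `A` is a simple ring.
-/

theorem smash_product_of_galois_extension_is_simple
    (K L : Type*) [Field K] [Field L] [Algebra K L]
    [FiniteDimensional K L] [IsGalois K L]
    (A : Type*) [Ring A] [Algebra K A]
    (i : L →ₐ[K] A) (u : (L ≃ₐ[K] L) → Aˣ)
    (hu_one : u 1 = 1)
    (hu_mul : ∀ γ δ : L ≃ₐ[K] L, u (γ * δ) = u γ * u δ)
    (hconj : ∀ (γ : L ≃ₐ[K] L) (a : L), (u γ : A) * i a = i (γ a) * (u γ : A))
    [Module L A]
    (hsmul : ∀ (a : L) (x : A), a • x = i a * x)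
    (b : Module.Basis (L ≃ₐ[K] L) L A)
    (hb : ∀ γ : L ≃ₐ[K] L, b γ = (u γ : A)) :
    IsSimpleRing A := by
  classical
  have repr_sum : ∀ (f : (L ≃ₐ[K] L) → L) (γ : L ≃ₐ[K] L),
      b.repr (∑ γ', f γ' • b γ') γ = f γ := by
    intro f γ
    rw [map_sum]
    simp [Module.Basis.repr_self, Finsupp.single_apply]
  have sum_repr : ∀ x : A, ∑ γ, b.repr x γ • b γ = x := fun x => b.sum_repr x
  have reprA : ∀ (a : L) (x : A) (γ : L ≃ₐ[K] L),
      b.repr (i a * x) γ = a * b.repr x γ := by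
    intro a x γ
    rw [← hsmul, map_smul]
    rfl
  have key1 : ∀ (r t : L) (γ' : L ≃ₐ[K] L),
      (r • b γ') * i t = (r * γ' t) • b γ' := by
    intro r t γ'
    rw [hsmul, hsmul, hb, mul_assoc, hconj, ← mul_assoc, ← map_mul]
  have key2 : ∀ (r : L) (γ' δ : L ≃ₐ[K] L),
      (r • b γ') * (u δ : A) = r • b (γ' * δ) := by
    intro r γ' δ
    rw [hsmul, hsmul, hb, hb, mul_assoc, ← Units.val_mul, ← hu_mul]
  have reprB : ∀ (t : L) (x : A) (γ : L ≃ₐ[K] L),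
      b.repr (x * i t) γ = γ t * b.repr x γ := by
    intro t x γ
    conv_lhs => rw [← sum_repr x, Finset.sum_mul]
    simp_rw [key1]
    rw [repr_sum]
    ring
  have reprC : ∀ (x : A) (δ γ : L ≃ₐ[K] L),
      b.repr (x * (u δ : A)) γ = b.repr x (γ * δ⁻¹) := by
    intro x δ γ
    conv_lhs => rw [← sum_repr x, Finset.sum_mul]
    simp_rw [key2]
    rw [Fintype.sum_equiv (Equiv.mulRight δ)
      (fun γ' => b.repr x γ' • b (γ' * δ))
      (fun γ'' => b.repr x (γ'' * δ⁻¹) • b γ'')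
      (fun γ' => by simp), repr_sum]
  haveI : Nontrivial A := ⟨b 1, 0, b.ne_zero 1⟩
  constructor
  constructor
  intro I
  by_cases hI : I = ⊥
  · left; exact hI
  right
  have hex : ∃ n, ∃ x, x ∈ I ∧ x ≠ 0 ∧ (b.repr x).support.card = n := by
    have : ∃ x ∈ I, x ≠ 0 := by
      by_contra h
      push_neg at h
      refine hI ?_
      ext x
      simp only [TwoSidedIdeal.mem_bot]
      exact ⟨fun hx => h x hx, fun hx => hx ▸ I.zero_mem⟩
    obtain ⟨x, hx, hx0⟩ := this
    exact ⟨_, x, hx, hx0, rfl⟩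
  obtain ⟨x, hxI, hx0, hxc⟩ := Nat.find_spec hex
  set n := Nat.find hex with hn
  have hsupp : ((b.repr x).support).Nonempty := by
    rw [Finsupp.support_nonempty_iff]
    intro h
    exact hx0 (by simpa using congrArg b.repr.symm h)
  obtain ⟨δ, hδ⟩ := hsupp
  set x' := x * (u δ⁻¹ : Aˣ) with hx'
  have hx'I : x' ∈ I := I.mul_mem_right _ _ hxI
  have hreprx' : ∀ γ, b.repr x' γ = b.repr x (γ * δ) := by
    intro γ; rw [hx', reprC, inv_inv]
  have hx'1 : b.repr x' 1 ≠ 0 := by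
    rw [hreprx', one_mul]
    exact Finsupp.mem_support_iff.mp hδ
  have hx'0 : x' ≠ 0 := fun h => hx'1 (by simp [h])
  have hx'card : (b.repr x').support.card = n := by
    rw [← hxc]
    apply Finset.card_bij (fun γ _ => γ * δ)
    · intro γ hγ
      rw [Finsupp.mem_support_iff, ← hreprx']
      exact Finsupp.mem_support_iff.mp hγ
    · intro γ₁ _ γ₂ _ h; exact mul_right_cancel h
    · intro γ hγ
      refine ⟨γ * δ⁻¹, ?_, by group⟩
      rw [Finsupp.mem_support_iff, hreprx', inv_mul_cancel_right]
      exact Finsupp.mem_support_iff.mp hγ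
  have honly : ∀ γ ∈ (b.repr x').support, γ = 1 := by
    intro γ hγ
    by_contra hγ1
    have : ∃ t : L, γ t ≠ t := by
      by_contra h
      push_neg at h
      exact hγ1 (by ext t; exact h t)
    obtain ⟨t, ht⟩ := this
    set y := i t * x' - x' * i t with hy
    have hyI : y ∈ I := I.sub_mem (I.mul_mem_left _ _ hx'I) (I.mul_mem_right _ _ hx'I)
    have hrepry : ∀ γ', b.repr y γ' = (t - γ' t) * b.repr x' γ' := by
      intro γ'
      rw [hy, map_sub, Finsupp.sub_apply, reprA, reprB]
      ring
    have hy0 : y ≠ 0 := by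
      intro h
      have h2 := hrepry γ
      rw [h] at h2
      simp only [map_zero, Finsupp.coe_zero, Pi.zero_apply] at h2
      exact (mul_ne_zero (sub_ne_zero.mpr fun he => ht he.symm)
        (Finsupp.mem_support_iff.mp hγ)) h2.symm
    have hysub : (b.repr y).support ⊆ (b.repr x').support \ {1} := by
      intro γ' hγ'
      rw [Finsupp.mem_support_iff, hrepry] at hγ'
      rw [Finset.mem_sdiff, Finsupp.mem_support_iff, Finset.mem_singleton]
      refine ⟨fun h => hγ' (by rw [h, mul_zero]), fun h => ?_⟩
      apply hγ'
      rw [h]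
      simp [AlgEquiv.one_apply]
    have hylt : (b.repr y).support.card < n := by
      calc (b.repr y).support.card ≤ ((b.repr x').support \ {1}).card :=
            Finset.card_le_card hysub
        _ < (b.repr x').support.card := by
            apply Finset.card_lt_card
            rw [Finset.ssubset_iff_of_subset Finset.sdiff_subset]
            exact ⟨1, Finsupp.mem_support_iff.mpr hx'1, by simp⟩
        _ = n := hx'card
    exact Nat.find_min hex hylt ⟨y, hyI, hy0, rfl⟩
  obtain ⟨r, hr⟩ : ∃ r, b.repr x' 1 = r := ⟨_, rfl⟩
  rw [hr] at hx'1
  have hx'eq : x' = i r := by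
    conv_lhs => rw [← sum_repr x']
    rw [Finset.sum_eq_single 1]
    · rw [hr, hb, hu_one, hsmul]
      simp
    · intro γ _ hγ1
      have h0 : b.repr x' γ = 0 := by
        by_contra h
        exact hγ1 (honly γ (Finsupp.mem_support_iff.mpr h))
      rw [h0, zero_smul]
    · exact fun h => absurd (Finset.mem_univ 1) h
  have h1I : (1 : A) ∈ I := by
    have hm := I.mul_mem_left (i r⁻¹) x' hx'I
    rwa [hx'eq, ← map_mul, inv_mul_cancel₀ hx'1, map_one] at hm
  exact I.eq_top h1I
end

section
/- The bigraded algebra Q = C⟨x,z,y,w⟩#μ_m / ⟨[x,z]=[y,z]=[z,w]=[y,w]=[x,w]=0, [y,x]=τ·zw⟩, with deg x = deg z = (1,0), deg y = deg w = (0,1), has bigraded components of dimension dim_C Q_{i,j} = (i+1)(j+1)·m for all i, j ≥ 0. -/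
/-!
STATEMENT 9: The bigraded algebra
`Q = ℂ⟨x,z,y,w⟩#μ_m / ⟨[x,z]=[y,z]=[z,w]=[y,w]=[x,w]=0, [y,x]=τ·zw⟩`, with
`deg x = deg z = (1,0)`, `deg y = deg w = (0,1)` and `deg γ = (0,0)` for
`γ ∈ μ_m`, has bigraded components of dimension
`dim_ℂ Q_{i,j} = (i+1)(j+1)·m` for all `i, j ≥ 0`.

The bigraded component `Q_{i,j}` is realized as the linear span of the images
of all words in the generators of total bidegree `(i,j)`.
-/

noncomputable section

abbrev muGroup (m : ℕ) := Multiplicative (ZMod m)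

abbrev CGrp (m : ℕ) := MonoidAlgebra ℂ (muGroup m)

/-- The primitive character `χ(g) = ε^g`. -/
def chi (m : ℕ) (ε : ℂ) (g : muGroup m) : ℂ := ε ^ (Multiplicative.toAdd g).val

/-- Generators of the noncommutative quadric algebra `Q`:
`x`, `z`, `y`, `w` and the group elements of `μ_m`. -/
inductive QGen (m : ℕ)
  | X : QGen m
  | Z : QGen m
  | Y : QGen m
  | W : QGen m
  | G : muGroup m → QGen m

/-- The image of an element of the group algebra `ℂΓ` in the free algebra. -/
def ofGrpQ (m : ℕ) (t : CGrp m) : FreeAlgebra ℂ (QGen m) :=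
  t.coeff.sum fun g a => a • FreeAlgebra.ι ℂ (QGen.G g)

/-- The defining relations of the noncommutative quadric algebra
`Q = ℂ⟨x,z,y,w⟩#μ_m / ⟨[x,z]=[y,z]=[z,w]=[y,w]=[x,w]=0, [y,x]=τ·zw⟩`. -/
inductive QRel (m : ℕ) (ε : ℂ) (τ : CGrp m) :
    FreeAlgebra ℂ (QGen m) → FreeAlgebra ℂ (QGen m) → Prop
  | grp_mul (g h : muGroup m) :
      QRel m ε τ (FreeAlgebra.ι ℂ (QGen.G g) * FreeAlgebra.ι ℂ (QGen.G h))
        (FreeAlgebra.ι ℂ (QGen.G (g * h)))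
  | grp_one : QRel m ε τ (FreeAlgebra.ι ℂ (QGen.G 1)) 1
  | gx (g : muGroup m) :
      QRel m ε τ (FreeAlgebra.ι ℂ (QGen.G g) * FreeAlgebra.ι ℂ QGen.X)
        (chi m ε g • (FreeAlgebra.ι ℂ QGen.X * FreeAlgebra.ι ℂ (QGen.G g)))
  | gy (g : muGroup m) :
      QRel m ε τ (FreeAlgebra.ι ℂ (QGen.G g) * FreeAlgebra.ι ℂ QGen.Y)
        ((chi m ε g)⁻¹ • (FreeAlgebra.ι ℂ QGen.Y * FreeAlgebra.ι ℂ (QGen.G g)))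
  | gz (g : muGroup m) :
      QRel m ε τ (FreeAlgebra.ι ℂ (QGen.G g) * FreeAlgebra.ι ℂ QGen.Z)
        (FreeAlgebra.ι ℂ QGen.Z * FreeAlgebra.ι ℂ (QGen.G g))
  | gw (g : muGroup m) :
      QRel m ε τ (FreeAlgebra.ι ℂ (QGen.G g) * FreeAlgebra.ι ℂ QGen.W)
        (FreeAlgebra.ι ℂ QGen.W * FreeAlgebra.ι ℂ (QGen.G g))
  | xz : QRel m ε τ (FreeAlgebra.ι ℂ QGen.X * FreeAlgebra.ι ℂ QGen.Z)
        (FreeAlgebra.ι ℂ QGen.Z * FreeAlgebra.ι ℂ QGen.X)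
  | yz : QRel m ε τ (FreeAlgebra.ι ℂ QGen.Y * FreeAlgebra.ι ℂ QGen.Z)
        (FreeAlgebra.ι ℂ QGen.Z * FreeAlgebra.ι ℂ QGen.Y)
  | zw : QRel m ε τ (FreeAlgebra.ι ℂ QGen.Z * FreeAlgebra.ι ℂ QGen.W)
        (FreeAlgebra.ι ℂ QGen.W * FreeAlgebra.ι ℂ QGen.Z)
  | yw : QRel m ε τ (FreeAlgebra.ι ℂ QGen.Y * FreeAlgebra.ι ℂ QGen.W)
        (FreeAlgebra.ι ℂ QGen.W * FreeAlgebra.ι ℂ QGen.Y)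
  | xw : QRel m ε τ (FreeAlgebra.ι ℂ QGen.X * FreeAlgebra.ι ℂ QGen.W)
        (FreeAlgebra.ι ℂ QGen.W * FreeAlgebra.ι ℂ QGen.X)
  | comm : QRel m ε τ (FreeAlgebra.ι ℂ QGen.Y * FreeAlgebra.ι ℂ QGen.X)
        (FreeAlgebra.ι ℂ QGen.X * FreeAlgebra.ι ℂ QGen.Y +
          ofGrpQ m τ * FreeAlgebra.ι ℂ QGen.Z * FreeAlgebra.ι ℂ QGen.W)

/-- The noncommutative quadric algebra `Q`. -/
abbrev NQuadric (m : ℕ) (ε : ℂ) (τ : CGrp m) := RingQuot (QRel m ε τ)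

/-- The image of a generator in `Q`. -/
def qgen (m : ℕ) (ε : ℂ) (τ : CGrp m) (s : QGen m) : NQuadric m ε τ :=
  RingQuot.mkAlgHom ℂ (QRel m ε τ) (FreeAlgebra.ι ℂ s)

def qX (m : ℕ) (ε : ℂ) (τ : CGrp m) : NQuadric m ε τ := qgen m ε τ QGen.X
def qZ (m : ℕ) (ε : ℂ) (τ : CGrp m) : NQuadric m ε τ := qgen m ε τ QGen.Z
def qY (m : ℕ) (ε : ℂ) (τ : CGrp m) : NQuadric m ε τ := qgen m ε τ QGen.Y
def qW (m : ℕ) (ε : ℂ) (τ : CGrp m) : NQuadric m ε τ := qgen m ε τ QGen.W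
def qG (m : ℕ) (ε : ℂ) (τ : CGrp m) (g : muGroup m) : NQuadric m ε τ :=
  qgen m ε τ (QGen.G g)

/-- The bidegree of a generator. -/
def qdeg (m : ℕ) : QGen m → ℕ × ℕ
  | QGen.X => (1, 0)
  | QGen.Z => (1, 0)
  | QGen.Y => (0, 1)
  | QGen.W => (0, 1)
  | QGen.G _ => (0, 0)

/-- The bigraded component `Q_{i,j}`: the span of the images of all words in
the generators of total bidegree `(i,j)`. -/
def qComponent (m : ℕ) (ε : ℂ) (τ : CGrp m) (i j : ℕ) :
    Submodule ℂ (NQuadric m ε τ) :=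
  Submodule.span ℂ
    {q : NQuadric m ε τ | ∃ l : List (QGen m),
      (l.map (qdeg m)).sum = (i, j) ∧ q = (l.map (qgen m ε τ)).prod}

namespace NQAux

variable (m : ℕ) (ε : ℂ) (τ : CGrp m)

/-! ### Character lemmas -/

lemma chi_mul (hm : 0 < m) (hε : ε ^ m = 1) (g h : muGroup m) :
    chi m ε (g * h) = chi m ε g * chi m ε h := by
  haveI : NeZero m := ⟨hm.ne'⟩
  unfold chi
  rw [toAdd_mul, ZMod.val_add, ← pow_eq_pow_mod _ hε, pow_add]

lemma chi_one' : chi m ε 1 = 1 := by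
  simp [chi]

lemma chi_ne_zero (hm : 0 < m) (hε : IsPrimitiveRoot ε m) (g : muGroup m) :
    chi m ε g ≠ 0 :=
  pow_ne_zero _ (hε.ne_zero hm.ne')

/-! ### The representation space -/

abbrev Pidx (m : ℕ) := ℕ × ℕ × ℕ × ℕ × muGroup m

abbrev Vsp (m : ℕ) := Pidx m →₀ ℂ

def e (p : Pidx m) : Vsp m := Finsupp.single p 1

def mkOp (f : Pidx m → Vsp m) : Vsp m →ₗ[ℂ] Vsp m :=
  Finsupp.linearCombination ℂ f

@[simp] lemma mkOp_e (f : Pidx m → Vsp m) (p : Pidx m) :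
    mkOp m f (e m p) = f p := by
  simp [mkOp, e, Finsupp.linearCombination_single]

def opX : Vsp m →ₗ[ℂ] Vsp m :=
  mkOp m fun p => e m (p.1 + 1, p.2.1, p.2.2.1, p.2.2.2.1, p.2.2.2.2)

def opZ : Vsp m →ₗ[ℂ] Vsp m :=
  mkOp m fun p => e m (p.1, p.2.1 + 1, p.2.2.1, p.2.2.2.1, p.2.2.2.2)

def opW : Vsp m →ₗ[ℂ] Vsp m :=
  mkOp m fun p => e m (p.1, p.2.1, p.2.2.1, p.2.2.2.1 + 1, p.2.2.2.2)

def opG (g : muGroup m) : Vsp m →ₗ[ℂ] Vsp m :=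
  mkOp m fun p =>
    (chi m ε g ^ p.1 * ((chi m ε g)⁻¹) ^ p.2.2.1) •
      e m (p.1, p.2.1, p.2.2.1, p.2.2.2.1, g * p.2.2.2.2)

def opY : Vsp m →ₗ[ℂ] Vsp m :=
  mkOp m fun p =>
    e m (p.1, p.2.1, p.2.2.1 + 1, p.2.2.2.1, p.2.2.2.2) +
      τ.coeff.sum fun h cf =>
        (cf * (∑ s ∈ Finset.range p.1, chi m ε h ^ s) *
            ((chi m ε h)⁻¹) ^ p.2.2.1) •
          e m (p.1 - 1, p.2.1 + 1, p.2.2.1, p.2.2.2.1 + 1, h * p.2.2.2.2)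

def repGen : QGen m → Module.End ℂ (Vsp m)
  | QGen.X => opX m
  | QGen.Z => opZ m
  | QGen.Y => opY m ε τ
  | QGen.W => opW m
  | QGen.G g => opG m ε g

/-! ### The representation -/

def rho0 : FreeAlgebra ℂ (QGen m) →ₐ[ℂ] Module.End ℂ (Vsp m) :=
  FreeAlgebra.lift ℂ (repGen m ε τ)

@[simp] lemma rho0_ι (s : QGen m) : rho0 m ε τ (FreeAlgebra.ι ℂ s) = repGen m ε τ s := by
  simp [rho0]

lemma endext {f g : Module.End ℂ (Vsp m)}
    (h : ∀ p : Pidx m, f (e m p) = g (e m p)) : f = g := by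
  apply Finsupp.lhom_ext'
  intro p
  apply LinearMap.ext_ring
  simpa [e] using h p

lemma sum_apply_lin (t : CGrp m) (f : muGroup m → ℂ → Module.End ℂ (Vsp m))
    (v : Vsp m) : (t.coeff.sum f) v = t.coeff.sum fun h cf => f h cf v :=
  map_finsuppSum (LinearMap.applyₗ (R := ℂ) v) t.coeff f

lemma rho0_rel (hm : 0 < m) (hε : IsPrimitiveRoot ε m) :
    ∀ ⦃x y⦄, QRel m ε τ x y → rho0 m ε τ x = rho0 m ε τ y := by
  have hpow : ε ^ m = 1 := hε.pow_eq_one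
  have hchimul := chi_mul m ε hm hpow
  have hchine := chi_ne_zero m ε hm hε
  intro x y r
  induction r with
  | grp_mul g h =>
      simp only [map_mul, rho0_ι, repGen]
      apply endext
      rintro ⟨a, c, b, d, u⟩
      simp only [Module.End.mul_apply, opG, mkOp_e, map_smul, smul_smul]
      rw [hchimul g h, mul_inv, mul_assoc g h u]
      congr 1
      rw [mul_pow, mul_pow]
      ring
  | grp_one =>
      simp only [rho0_ι, repGen, map_one]
      apply endext
      rintro ⟨a, c, b, d, u⟩
      simp [opG, chi_one']
  | gx g =>
      simp only [map_mul, map_smul, rho0_ι, repGen]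
      apply endext
      rintro ⟨a, c, b, d, u⟩
      simp only [Module.End.mul_apply, LinearMap.smul_apply, opG, opX, mkOp_e,
        map_smul, smul_smul]
      congr 1
      rw [pow_succ]
      ring
  | gz g =>
      simp only [map_mul, rho0_ι, repGen]
      apply endext
      rintro ⟨a, c, b, d, u⟩
      simp [Module.End.mul_apply, opG, opZ, mkOp_e, map_smul]
  | gw g =>
      simp only [map_mul, rho0_ι, repGen]
      apply endext
      rintro ⟨a, c, b, d, u⟩
      simp [Module.End.mul_apply, opG, opW, mkOp_e, map_smul]
  | gy g =>
      simp only [map_mul, map_smul, rho0_ι, repGen]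
      apply endext
      rintro ⟨a, c, b, d, u⟩
      simp only [Module.End.mul_apply, LinearMap.smul_apply, opG, opY, mkOp_e,
        map_add, map_smul, map_finsuppSum, smul_add, Finsupp.smul_sum, smul_smul]
      congr 1
      · congr 1
        rw [pow_succ]
        ring
      · apply Finsupp.sum_congr
        intro h _
        rw [mul_left_comm g h u]
        cases a with
        | zero => simp
        | succ n =>
            congr 1
            have h1 : (chi m ε g)⁻¹ * chi m ε g ^ (n + 1) = chi m ε g ^ n := by
              rw [pow_succ']
              rw [← mul_assoc, inv_mul_cancel₀ (hchine g), one_mul]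
            simp only [Nat.add_sub_cancel]
            rw [← h1]
            ring
  | xz =>
      simp only [map_mul, rho0_ι, repGen]
      apply endext
      rintro ⟨a, c, b, d, u⟩
      simp [Module.End.mul_apply, opX, opZ, mkOp_e]
  | yz =>
      simp only [map_mul, rho0_ι, repGen]
      apply endext
      rintro ⟨a, c, b, d, u⟩
      simp [Module.End.mul_apply, opY, opZ, mkOp_e, map_add, map_finsuppSum, map_smul]
  | zw =>
      simp only [map_mul, rho0_ι, repGen]
      apply endext
      rintro ⟨a, c, b, d, u⟩
      simp [Module.End.mul_apply, opZ, opW, mkOp_e]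
  | yw =>
      simp only [map_mul, rho0_ι, repGen]
      apply endext
      rintro ⟨a, c, b, d, u⟩
      simp [Module.End.mul_apply, opY, opW, mkOp_e, map_add, map_finsuppSum, map_smul]
  | xw =>
      simp only [map_mul, rho0_ι, repGen]
      apply endext
      rintro ⟨a, c, b, d, u⟩
      simp [Module.End.mul_apply, opX, opW, mkOp_e]
  | comm =>
      simp only [map_mul, map_add, rho0_ι, repGen]
      have hτ : rho0 m ε τ (ofGrpQ m τ) = τ.coeff.sum fun h cf => cf • opG m ε h := by
        unfold ofGrpQ
        rw [map_finsuppSum]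
        apply Finsupp.sum_congr
        intro h _
        rw [map_smul, rho0_ι]
        rfl
      rw [hτ]
      apply endext
      rintro ⟨a, c, b, d, u⟩
      simp only [Module.End.mul_apply, LinearMap.add_apply, opX, opY, opZ, opW,
        mkOp_e, map_add, map_finsuppSum, map_smul, Finsupp.sum_apply',
        LinearMap.smul_apply, opG]
      rw [sum_apply_lin]
      simp only [LinearMap.smul_apply, mkOp_e]
      rw [add_assoc, ← Finsupp.sum_add]
      congr 1
      apply Finsupp.sum_congr
      intro h _
      cases a with
      | zero =>
          simp [smul_smul]
      | succ n =>
          simp only [Nat.add_sub_cancel, Nat.succ_sub_one, smul_smul]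
          rw [Finset.sum_range_succ, ← add_smul]
          congr 1
          ring

/-! ### The representation on `NQuadric` -/

def rho (hm : 0 < m) (hε : IsPrimitiveRoot ε m) :
    NQuadric m ε τ →ₐ[ℂ] Module.End ℂ (Vsp m) :=
  RingQuot.liftAlgHom ℂ ⟨rho0 m ε τ, rho0_rel m ε τ hm hε⟩

@[simp] lemma rho_qgen (hm : 0 < m) (hε : IsPrimitiveRoot ε m) (s : QGen m) :
    rho m ε τ hm hε (qgen m ε τ s) = repGen m ε τ s := by
  unfold rho qgen
  rw [RingQuot.liftAlgHom_mkAlgHom_apply]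
  simp

/-! ### Relations inside `NQuadric` -/

lemma rGG (g h : muGroup m) : qG m ε τ g * qG m ε τ h = qG m ε τ (g * h) := by
  have := RingQuot.mkAlgHom_rel ℂ (QRel.grp_mul (m := m) (ε := ε) (τ := τ) g h)
  rw [map_mul] at this
  exact this

lemma rG1 : qG m ε τ 1 = 1 := by
  have := RingQuot.mkAlgHom_rel ℂ (QRel.grp_one (m := m) (ε := ε) (τ := τ))
  rw [map_one] at this
  exact this

lemma rGX (g : muGroup m) :
    qG m ε τ g * qX m ε τ = chi m ε g • (qX m ε τ * qG m ε τ g) := by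
  have := RingQuot.mkAlgHom_rel ℂ (QRel.gx (m := m) (ε := ε) (τ := τ) g)
  rw [map_mul, map_smul, map_mul] at this
  exact this

lemma rGY (g : muGroup m) :
    qG m ε τ g * qY m ε τ = (chi m ε g)⁻¹ • (qY m ε τ * qG m ε τ g) := by
  have := RingQuot.mkAlgHom_rel ℂ (QRel.gy (m := m) (ε := ε) (τ := τ) g)
  rw [map_mul, map_smul, map_mul] at this
  exact this

lemma cGZ (g : muGroup m) : Commute (qG m ε τ g) (qZ m ε τ) := by
  have := RingQuot.mkAlgHom_rel ℂ (QRel.gz (m := m) (ε := ε) (τ := τ) g)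
  rw [map_mul, map_mul] at this
  exact this

lemma cGW (g : muGroup m) : Commute (qG m ε τ g) (qW m ε τ) := by
  have := RingQuot.mkAlgHom_rel ℂ (QRel.gw (m := m) (ε := ε) (τ := τ) g)
  rw [map_mul, map_mul] at this
  exact this

lemma cXZ : Commute (qX m ε τ) (qZ m ε τ) := by
  have := RingQuot.mkAlgHom_rel ℂ (QRel.xz (m := m) (ε := ε) (τ := τ))
  rw [map_mul, map_mul] at this
  exact this

lemma cYZ : Commute (qY m ε τ) (qZ m ε τ) := by
  have := RingQuot.mkAlgHom_rel ℂ (QRel.yz (m := m) (ε := ε) (τ := τ))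
  rw [map_mul, map_mul] at this
  exact this

lemma cZW : Commute (qZ m ε τ) (qW m ε τ) := by
  have := RingQuot.mkAlgHom_rel ℂ (QRel.zw (m := m) (ε := ε) (τ := τ))
  rw [map_mul, map_mul] at this
  exact this

lemma cYW : Commute (qY m ε τ) (qW m ε τ) := by
  have := RingQuot.mkAlgHom_rel ℂ (QRel.yw (m := m) (ε := ε) (τ := τ))
  rw [map_mul, map_mul] at this
  exact this

lemma cXW : Commute (qX m ε τ) (qW m ε τ) := by
  have := RingQuot.mkAlgHom_rel ℂ (QRel.xw (m := m) (ε := ε) (τ := τ))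
  rw [map_mul, map_mul] at this
  exact this

/-- The image of `τ` in `NQuadric`. -/
def Tq : NQuadric m ε τ := ∑ h ∈ τ.coeff.support, τ.coeff h • qG m ε τ h

lemma rYX :
    qY m ε τ * qX m ε τ =
      qX m ε τ * qY m ε τ + Tq m ε τ * (qZ m ε τ * qW m ε τ) := by
  have := RingQuot.mkAlgHom_rel ℂ (QRel.comm (m := m) (ε := ε) (τ := τ))
  rw [map_mul, map_add, map_mul, map_mul, map_mul] at this
  have hτ : RingQuot.mkAlgHom ℂ (QRel m ε τ) (ofGrpQ m τ) = Tq m ε τ := by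
    unfold ofGrpQ Tq Finsupp.sum
    rw [map_sum]
    apply Finset.sum_congr rfl
    intro h _
    rw [map_smul]
    rfl
  rw [hτ, mul_assoc] at this
  exact this

/-! ### Commutation with powers -/

lemma rGXpow (g : muGroup m) (a : ℕ) :
    qG m ε τ g * qX m ε τ ^ a = chi m ε g ^ a • (qX m ε τ ^ a * qG m ε τ g) := by
  induction a with
  | zero => simp
  | succ n ih =>
      rw [pow_succ, ← mul_assoc, ih, smul_mul_assoc, mul_assoc, rGX,
        mul_smul_comm, smul_smul, pow_succ, mul_assoc]

lemma rGYpow (g : muGroup m) (b : ℕ) :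
    qG m ε τ g * qY m ε τ ^ b =
      ((chi m ε g)⁻¹) ^ b • (qY m ε τ ^ b * qG m ε τ g) := by
  induction b with
  | zero => simp
  | succ n ih =>
      rw [pow_succ, ← mul_assoc, ih, smul_mul_assoc, mul_assoc, rGY,
        mul_smul_comm, smul_smul, pow_succ, mul_assoc]

/-! ### Normal monomials -/

def Mq0 (c b d : ℕ) (g : muGroup m) : NQuadric m ε τ :=
  qZ m ε τ ^ c * (qY m ε τ ^ b * (qW m ε τ ^ d * qG m ε τ g))

def Mq (a c b d : ℕ) (g : muGroup m) : NQuadric m ε τ :=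
  qX m ε τ ^ a * Mq0 m ε τ c b d g

lemma mulX_Mq (a c b d : ℕ) (g : muGroup m) :
    qX m ε τ * Mq m ε τ a c b d g = Mq m ε τ (a + 1) c b d g := by
  unfold Mq
  rw [← mul_assoc, ← pow_succ']

lemma mulZ_Mq (a c b d : ℕ) (g : muGroup m) :
    qZ m ε τ * Mq m ε τ a c b d g = Mq m ε τ a (c + 1) b d g := by
  unfold Mq Mq0
  rw [← mul_assoc, ((cXZ m ε τ).symm.pow_right a).eq, mul_assoc, ← mul_assoc (qZ m ε τ),
    ← pow_succ']

lemma mulW_Mq (a c b d : ℕ) (g : muGroup m) :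
    qW m ε τ * Mq m ε τ a c b d g = Mq m ε τ a c b (d + 1) g := by
  unfold Mq Mq0
  rw [← mul_assoc, ((cXW m ε τ).symm.pow_right a).eq, mul_assoc, ← mul_assoc (qW m ε τ),
    ((cZW m ε τ).symm.pow_right c).eq, mul_assoc, ← mul_assoc (qW m ε τ),
    ((cYW m ε τ).symm.pow_right b).eq, mul_assoc, ← mul_assoc (qW m ε τ), ← pow_succ']

lemma mulG_Mq0 (h : muGroup m) (c b d : ℕ) (g : muGroup m) :
    qG m ε τ h * Mq0 m ε τ c b d g =
      ((chi m ε h)⁻¹) ^ b • Mq0 m ε τ c b d (h * g) := by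
  unfold Mq0
  rw [← mul_assoc, ((cGZ m ε τ h).pow_right c).eq, mul_assoc,
    ← mul_assoc (qG m ε τ h), rGYpow, smul_mul_assoc, mul_assoc,
    ← mul_assoc (qG m ε τ h), ((cGW m ε τ h).pow_right d).eq, mul_assoc, rGG,
    mul_smul_comm]

lemma mulG_Mq (h : muGroup m) (a c b d : ℕ) (g : muGroup m) :
    qG m ε τ h * Mq m ε τ a c b d g =
      (chi m ε h ^ a * ((chi m ε h)⁻¹) ^ b) • Mq m ε τ a c b d (h * g) := by
  unfold Mq
  rw [← mul_assoc, rGXpow, smul_mul_assoc, mul_assoc, mulG_Mq0, mul_smul_comm,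
    smul_smul]


/-! ### Straightening `Y` past powers of `X` -/

def Tel (a : ℕ) : NQuadric m ε τ :=
  ∑ h ∈ τ.coeff.support, (τ.coeff h * ∑ s ∈ Finset.range a, chi m ε h ^ s) • qG m ε τ h

lemma Tel_zero : Tel m ε τ 0 = 0 := by simp [Tel]

lemma Tel_succ (n : ℕ) :
    Tel m ε τ (n + 1) =
      Tel m ε τ n + ∑ h ∈ τ.coeff.support, (τ.coeff h * chi m ε h ^ n) • qG m ε τ h := by
  unfold Tel
  rw [← Finset.sum_add_distrib]
  refine Finset.sum_congr rfl fun h _ => ?_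
  rw [Finset.sum_range_succ, mul_add, add_smul]

lemma TqX_pow (a : ℕ) :
    Tq m ε τ * qX m ε τ ^ a =
      qX m ε τ ^ a * ∑ h ∈ τ.coeff.support, (τ.coeff h * chi m ε h ^ a) • qG m ε τ h := by
  unfold Tq
  rw [Finset.sum_mul, Finset.mul_sum]
  refine Finset.sum_congr rfl fun h _ => ?_
  rw [smul_mul_assoc, rGXpow, smul_smul, mul_smul_comm]

lemma YXpow (a : ℕ) :
    qY m ε τ * qX m ε τ ^ a =
      qX m ε τ ^ a * qY m ε τ +
        qX m ε τ ^ (a - 1) * (Tel m ε τ a * (qZ m ε τ * qW m ε τ)) := by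
  induction a with
  | zero => simp [Tel]
  | succ n ih =>
      have hZWX : (qZ m ε τ * qW m ε τ) * qX m ε τ ^ n
          = qX m ε τ ^ n * (qZ m ε τ * qW m ε τ) :=
        (((cXZ m ε τ).symm.mul_left (cXW m ε τ).symm).pow_right n).eq
      have hX : qX m ε τ * (qX m ε τ ^ (n - 1) * (Tel m ε τ n * (qZ m ε τ * qW m ε τ)))
          = qX m ε τ ^ n * (Tel m ε τ n * (qZ m ε τ * qW m ε τ)) := by
        cases n with
        | zero => simp [Tel]
        | succ k => rw [← mul_assoc, ← pow_succ', Nat.add_sub_cancel]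
      rw [pow_succ', ← mul_assoc, rYX, add_mul, mul_assoc (qX m ε τ), ih, mul_add, hX,
        ← mul_assoc (qX m ε τ), ← pow_succ', mul_assoc (Tq m ε τ), hZWX,
        ← mul_assoc (Tq m ε τ), TqX_pow, mul_assoc (qX m ε τ ^ n), Nat.add_sub_cancel,
        Tel_succ, add_mul, mul_add, add_assoc]

/-! ### Left multiplication on normal monomials -/

lemma mulZ_Mq0 (c b d : ℕ) (g : muGroup m) :
    qZ m ε τ * Mq0 m ε τ c b d g = Mq0 m ε τ (c + 1) b d g := by
  have := mulZ_Mq m ε τ 0 c b d g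
  simpa [Mq, pow_zero, one_mul] using this

lemma mulW_Mq0 (c b d : ℕ) (g : muGroup m) :
    qW m ε τ * Mq0 m ε τ c b d g = Mq0 m ε τ c b (d + 1) g := by
  have := mulW_Mq m ε τ 0 c b d g
  simpa [Mq, pow_zero, one_mul] using this

lemma mulY_Mq0 (c b d : ℕ) (g : muGroup m) :
    qY m ε τ * Mq0 m ε τ c b d g = Mq0 m ε τ c (b + 1) d g := by
  unfold Mq0
  rw [← mul_assoc, ((cYZ m ε τ).pow_right c).eq, mul_assoc, ← mul_assoc (qY m ε τ),
    ← pow_succ']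

lemma ZW_Mq0 (c b d : ℕ) (g : muGroup m) :
    (qZ m ε τ * qW m ε τ) * Mq0 m ε τ c b d g = Mq0 m ε τ (c + 1) b (d + 1) g := by
  rw [mul_assoc, mulW_Mq0, mulZ_Mq0]

lemma mulY_Mq (a c b d : ℕ) (g : muGroup m) :
    qY m ε τ * Mq m ε τ a c b d g =
      Mq m ε τ a c (b + 1) d g +
        ∑ h ∈ τ.coeff.support,
          ((τ.coeff h * ∑ s ∈ Finset.range a, chi m ε h ^ s) * ((chi m ε h)⁻¹) ^ b) •
            Mq m ε τ (a - 1) (c + 1) b (d + 1) (h * g) := by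
  unfold Mq
  rw [← mul_assoc, YXpow, add_mul, mul_assoc (qX m ε τ ^ a), mulY_Mq0,
    mul_assoc (qX m ε τ ^ (a - 1)), mul_assoc (Tel m ε τ a), ZW_Mq0]
  congr 1
  unfold Tel
  rw [Finset.sum_mul, Finset.mul_sum]
  refine Finset.sum_congr rfl fun h _ => ?_
  rw [smul_mul_assoc, mulG_Mq0, smul_smul, mul_smul_comm]


/-! ### Spanning by normal monomials -/

def SMon (i j : ℕ) : Set (NQuadric m ε τ) :=
  {q | ∃ a c b d g, a + c = i ∧ b + d = j ∧ q = Mq m ε τ a c b d g}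

def NSpan (i j : ℕ) : Submodule ℂ (NQuadric m ε τ) :=
  Submodule.span ℂ (SMon m ε τ i j)

lemma Mq_mem_NSpan {a c b d i j : ℕ} (g : muGroup m)
    (h1 : a + c = i) (h2 : b + d = j) :
    Mq m ε τ a c b d g ∈ NSpan m ε τ i j :=
  Submodule.subset_span ⟨a, c, b, d, g, h1, h2, rfl⟩

lemma gen_mul_mem (s : QGen m) {i j : ℕ} {q : NQuadric m ε τ}
    (hq : q ∈ NSpan m ε τ i j) :
    qgen m ε τ s * q ∈ NSpan m ε τ (i + (qdeg m s).1) (j + (qdeg m s).2) := by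
  induction hq using Submodule.span_induction with
  | mem q hq =>
      obtain ⟨a, c, b, d, g, h1, h2, rfl⟩ := hq
      cases s with
      | X =>
          rw [show qgen m ε τ QGen.X = qX m ε τ from rfl, mulX_Mq]
          exact Mq_mem_NSpan m ε τ g (by simp [qdeg]; omega) (by simp [qdeg]; omega)
      | Z =>
          rw [show qgen m ε τ QGen.Z = qZ m ε τ from rfl, mulZ_Mq]
          exact Mq_mem_NSpan m ε τ g (by simp [qdeg]; omega) (by simp [qdeg]; omega)
      | W =>
          rw [show qgen m ε τ QGen.W = qW m ε τ from rfl, mulW_Mq]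
          exact Mq_mem_NSpan m ε τ g (by simp [qdeg]; omega) (by simp [qdeg]; omega)
      | G g' =>
          rw [show qgen m ε τ (QGen.G g') = qG m ε τ g' from rfl, mulG_Mq]
          exact Submodule.smul_mem _ _
            (Mq_mem_NSpan m ε τ _ (by simp [qdeg]; omega) (by simp [qdeg]; omega))
      | Y =>
          rw [show qgen m ε τ QGen.Y = qY m ε τ from rfl, mulY_Mq]
          apply add_mem
          · exact Mq_mem_NSpan m ε τ g (by simp [qdeg]; omega) (by simp [qdeg]; omega)
          · cases a with
            | zero =>
                simp only [Finset.sum_range_zero, mul_zero, zero_mul, zero_smul,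
                  Finset.sum_const_zero]
                exact zero_mem _
            | succ n =>
                refine Submodule.sum_mem _ fun h _ => Submodule.smul_mem _ _ ?_
                exact Mq_mem_NSpan m ε τ _ (by simp [qdeg]; omega) (by simp [qdeg]; omega)
  | zero => rw [mul_zero]; exact zero_mem _
  | add p q hp hq ihp ihq => rw [mul_add]; exact add_mem ihp ihq
  | smul r p hp ihp => rw [mul_smul_comm]; exact Submodule.smul_mem _ _ ihp

lemma one_eq_Mq : (1 : NQuadric m ε τ) = Mq m ε τ 0 0 0 0 1 := by
  simp [Mq, Mq0, rG1]

lemma word_mem (l : List (QGen m)) :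
    (l.map (qgen m ε τ)).prod ∈
      NSpan m ε τ ((l.map (qdeg m)).sum).1 ((l.map (qdeg m)).sum).2 := by
  induction l with
  | nil =>
      simp only [List.map_nil, List.prod_nil, List.sum_nil]
      rw [one_eq_Mq]
      exact Mq_mem_NSpan m ε τ 1 rfl rfl
  | cons s l ih =>
      simp only [List.map_cons, List.prod_cons, List.sum_cons]
      have := gen_mul_mem m ε τ s ih
      simpa [Prod.fst_add, Prod.snd_add, Nat.add_comm] using this

lemma word_repr (a c b d : ℕ) (g : muGroup m) :
    ∃ l : List (QGen m), (l.map (qdeg m)).sum = (a + c, b + d) ∧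
      Mq m ε τ a c b d g = (l.map (qgen m ε τ)).prod := by
  refine ⟨List.replicate a QGen.X ++ List.replicate c QGen.Z ++
    List.replicate b QGen.Y ++ List.replicate d QGen.W ++ [QGen.G g], ?_, ?_⟩
  · simp only [List.map_append, List.sum_append, List.map_replicate, qdeg,
      List.sum_replicate, List.map_cons, List.map_nil, List.sum_cons, List.sum_nil,
      smul_eq_mul, Prod.mk_add_mk, add_zero, Prod.ext_iff, Prod.smul_mk, smul_zero]
    constructor <;> omega
  · simp [Mq, Mq0, List.map_append, List.prod_append, List.map_replicate,
      List.prod_replicate, mul_assoc, qX, qZ, qY, qW, qG]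

lemma component_eq (i j : ℕ) : qComponent m ε τ i j = NSpan m ε τ i j := by
  apply le_antisymm
  · rw [qComponent, Submodule.span_le]
    rintro q ⟨l, hsum, rfl⟩
    have := word_mem m ε τ l
    rw [hsum] at this
    exact this
  · rw [NSpan, Submodule.span_le]
    rintro q ⟨a, c, b, d, g, h1, h2, rfl⟩
    obtain ⟨l, hl, hq⟩ := word_repr m ε τ a c b d g
    rw [h1, h2] at hl
    exact Submodule.subset_span ⟨l, hl, hq⟩

def Fam (i j : ℕ) : Fin (i + 1) × Fin (j + 1) × muGroup m → NQuadric m ε τ :=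
  fun q => Mq m ε τ q.1 (i - q.1) q.2.1 (j - q.2.1) q.2.2

lemma SMon_eq_range (i j : ℕ) :
    SMon m ε τ i j = Set.range (Fam m ε τ i j) := by
  ext q
  constructor
  · rintro ⟨a, c, b, d, g, h1, h2, rfl⟩
    refine ⟨(⟨a, by omega⟩, ⟨b, by omega⟩, g), ?_⟩
    show Mq m ε τ a (i - a) b (j - b) g = Mq m ε τ a c b d g
    rw [show i - a = c by omega, show j - b = d by omega]
  · rintro ⟨⟨a, b, g⟩, rfl⟩
    exact ⟨a, i - a.1, b, j - b.1, g, by omega, by omega, rfl⟩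


/-! ### Linear independence of normal monomials -/

def v0 : Vsp m := e m (0, 0, 0, 0, 1)

def Lmap (hm : 0 < m) (hε : IsPrimitiveRoot ε m) : NQuadric m ε τ →ₗ[ℂ] Vsp m :=
  LinearMap.applyₗ (v0 m) ∘ₗ (rho m ε τ hm hε).toLinearMap

lemma opX_pow (a : ℕ) : ∀ (a0 c b d : ℕ) (u : muGroup m),
    ((opX m) ^ a) (e m (a0, c, b, d, u)) = e m (a0 + a, c, b, d, u) := by
  induction a with
  | zero => intro a0 c b d u; simp
  | succ n ih =>
      intro a0 c b d u
      rw [pow_succ, Module.End.mul_apply,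
        show (opX m) (e m (a0, c, b, d, u)) = e m (a0 + 1, c, b, d, u) from
          mkOp_e m _ _, ih, show a0 + 1 + n = a0 + (n + 1) by omega]

lemma opZ_pow (a : ℕ) : ∀ (a0 c b d : ℕ) (u : muGroup m),
    ((opZ m) ^ a) (e m (a0, c, b, d, u)) = e m (a0, c + a, b, d, u) := by
  induction a with
  | zero => intro a0 c b d u; simp
  | succ n ih =>
      intro a0 c b d u
      rw [pow_succ, Module.End.mul_apply,
        show (opZ m) (e m (a0, c, b, d, u)) = e m (a0, c + 1, b, d, u) from
          mkOp_e m _ _, ih, show c + 1 + n = c + (n + 1) by omega]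

lemma opW_pow (a : ℕ) : ∀ (a0 c b d : ℕ) (u : muGroup m),
    ((opW m) ^ a) (e m (a0, c, b, d, u)) = e m (a0, c, b, d + a, u) := by
  induction a with
  | zero => intro a0 c b d u; simp
  | succ n ih =>
      intro a0 c b d u
      rw [pow_succ, Module.End.mul_apply,
        show (opW m) (e m (a0, c, b, d, u)) = e m (a0, c, b, d + 1, u) from
          mkOp_e m _ _, ih, show d + 1 + n = d + (n + 1) by omega]

lemma opY_apply0 (c b d : ℕ) (u : muGroup m) :
    opY m ε τ (e m (0, c, b, d, u)) = e m (0, c, b + 1, d, u) := by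
  rw [opY, mkOp_e]
  simp

lemma opY_pow (a : ℕ) : ∀ (c b d : ℕ) (u : muGroup m),
    ((opY m ε τ) ^ a) (e m (0, c, b, d, u)) = e m (0, c, b + a, d, u) := by
  induction a with
  | zero => intro c b d u; simp
  | succ n ih =>
      intro c b d u
      rw [pow_succ, Module.End.mul_apply, opY_apply0, ih,
        show b + 1 + n = b + (n + 1) by omega]

lemma opG_v0 (g : muGroup m) : opG m ε g (v0 m) = e m (0, 0, 0, 0, g) := by
  rw [v0, opG, mkOp_e]
  simp

lemma applyl_eq (F : Module.End ℂ (Vsp m)) (v : Vsp m) :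
    LinearMap.applyₗ v F = F v := rfl

lemma Lmap_Mq (hm : 0 < m) (hε : IsPrimitiveRoot ε m) (a c b d : ℕ)
    (g : muGroup m) :
    Lmap m ε τ hm hε (Mq m ε τ a c b d g) = e m (a, c, b, d, g) := by
  unfold Lmap Mq Mq0
  simp only [LinearMap.coe_comp, Function.comp_apply, AlgHom.toLinearMap_apply,
    map_mul, map_pow, qX, qZ, qY, qW, qG, rho_qgen, repGen,
    applyl_eq, Module.End.mul_apply]
  rw [opG_v0, opW_pow, opY_pow, opZ_pow, opX_pow]
  simp

lemma Fam_indep (hm : 0 < m) (hε : IsPrimitiveRoot ε m) (i j : ℕ) :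
    LinearIndependent ℂ (Fam m ε τ i j) := by
  apply LinearIndependent.of_comp (Lmap m ε τ hm hε)
  have hinj : Function.Injective
      (fun q : Fin (i + 1) × Fin (j + 1) × muGroup m =>
        ((q.1.1, i - q.1.1, q.2.1.1, j - q.2.1.1, q.2.2) : Pidx m)) := by
    rintro ⟨⟨a, ha⟩, ⟨b, hb⟩, g⟩ ⟨⟨a', ha'⟩, ⟨b', hb'⟩, g'⟩ h
    simp only [Prod.mk.injEq, Fin.mk.injEq] at h ⊢
    exact ⟨h.1, h.2.2.1, h.2.2.2.2⟩
  have heq : (⇑(Lmap m ε τ hm hε) ∘ Fam m ε τ i j) =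
      fun q : Fin (i + 1) × Fin (j + 1) × muGroup m =>
        (Finsupp.basisSingleOne (R := ℂ))
          ((q.1.1, i - q.1.1, q.2.1.1, j - q.2.1.1, q.2.2) : Pidx m) := by
    funext q
    simp only [Function.comp_apply, Fam, Lmap_Mq, e, Finsupp.coe_basisSingleOne]
  rw [heq]
  exact Finsupp.basisSingleOne.linearIndependent.comp _ hinj


end NQAux

theorem nquadric_bigraded_component_dimension
    (m : ℕ) (hm : 0 < m) (ε : ℂ) (hε : IsPrimitiveRoot ε m) (τ : CGrp m)
    (i j : ℕ) :
    Module.finrank ℂ (qComponent m ε τ i j) = (i + 1) * (j + 1) * m := by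
  haveI : NeZero m := ⟨hm.ne'⟩
  classical
  rw [NQAux.component_eq, NQAux.NSpan, NQAux.SMon_eq_range,
    finrank_span_eq_card (NQAux.Fam_indep m ε τ hm hε i j)]
  simp [Fintype.card_prod, ZMod.card]
  ring

end
end

section
/- There is an algebra isomorphism B_τ ≅ Q / ((z−1)Q + (w−1)Q), where B_τ = C⟨x,y⟩#μ_m / ⟨[y,x]=τ⟩ and Q is the noncommutative quadric algebra. -/
/-!
STATEMENT 11: There is an algebra isomorphism
`B_τ ≅ Q / ((z−1)Q + (w−1)Q)`, where `B_τ = ℂ⟨x,y⟩#μ_m / ⟨[y,x]=τ⟩` and `Q`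
is the noncommutative quadric algebra.  Since `z` and `w` are central in `Q`,
the right ideal `(z−1)Q + (w−1)Q` is a two-sided ideal, and the quotient ring
is realized as the quotient of `Q` by the relations `z = 1`, `w = 1`.
The isomorphism sends `x ↦ x`, `y ↦ y`, `γ ↦ γ`.
-/

noncomputable section

inductive BGen (m : ℕ)
  | X : BGen m
  | Y : BGen m
  | G : muGroup m → BGen m

/-- The image of an element of the group algebra `ℂΓ` in the free algebra. -/
def ofGrp (m : ℕ) (t : CGrp m) : FreeAlgebra ℂ (BGen m) :=
  t.coeff.sum fun g a => a • FreeAlgebra.ι ℂ (BGen.G g)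

/-- The defining relations of `B_τ = ℂ⟨x,y⟩#μ_m / ⟨[y,x] = τ⟩`. -/
inductive BRel (m : ℕ) (ε : ℂ) (τ : CGrp m) :
    FreeAlgebra ℂ (BGen m) → FreeAlgebra ℂ (BGen m) → Prop
  | grp_mul (g h : muGroup m) :
      BRel m ε τ (FreeAlgebra.ι ℂ (BGen.G g) * FreeAlgebra.ι ℂ (BGen.G h))
        (FreeAlgebra.ι ℂ (BGen.G (g * h)))
  | grp_one : BRel m ε τ (FreeAlgebra.ι ℂ (BGen.G 1)) 1
  | gx (g : muGroup m) :
      BRel m ε τ (FreeAlgebra.ι ℂ (BGen.G g) * FreeAlgebra.ι ℂ BGen.X)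
        (chi m ε g • (FreeAlgebra.ι ℂ BGen.X * FreeAlgebra.ι ℂ (BGen.G g)))
  | gy (g : muGroup m) :
      BRel m ε τ (FreeAlgebra.ι ℂ (BGen.G g) * FreeAlgebra.ι ℂ BGen.Y)
        ((chi m ε g)⁻¹ • (FreeAlgebra.ι ℂ BGen.Y * FreeAlgebra.ι ℂ (BGen.G g)))
  | comm : BRel m ε τ (FreeAlgebra.ι ℂ BGen.Y * FreeAlgebra.ι ℂ BGen.X)
        (FreeAlgebra.ι ℂ BGen.X * FreeAlgebra.ι ℂ BGen.Y + ofGrp m τ)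

/-- The Crawley-Boevey–Holland algebra `B_τ`. -/
abbrev CBH (m : ℕ) (ε : ℂ) (τ : CGrp m) := RingQuot (BRel m ε τ)

def bX (m : ℕ) (ε : ℂ) (τ : CGrp m) : CBH m ε τ :=
  RingQuot.mkAlgHom ℂ (BRel m ε τ) (FreeAlgebra.ι ℂ BGen.X)

def bY (m : ℕ) (ε : ℂ) (τ : CGrp m) : CBH m ε τ :=
  RingQuot.mkAlgHom ℂ (BRel m ε τ) (FreeAlgebra.ι ℂ BGen.Y)

def bG (m : ℕ) (ε : ℂ) (τ : CGrp m) (g : muGroup m) : CBH m ε τ :=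
  RingQuot.mkAlgHom ℂ (BRel m ε τ) (FreeAlgebra.ι ℂ (BGen.G g))

/-- The (linear) embedding of the group algebra `ℂΓ` into `B_τ`. -/
def bOf (m : ℕ) (ε : ℂ) (τ : CGrp m) (t : CGrp m) : CBH m ε τ :=
  RingQuot.mkAlgHom ℂ (BRel m ε τ) (ofGrp m t)


/-- The relations `z = 1`, `w = 1` on `Q`, presenting the quotient of `Q` by
the (two-sided, since `z, w` are central) ideal `(z−1)Q + (w−1)Q`. -/
inductive AffineRel (m : ℕ) (ε : ℂ) (τ : CGrp m) :
    NQuadric m ε τ → NQuadric m ε τ → Prop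
  | z : AffineRel m ε τ (qZ m ε τ) 1
  | w : AffineRel m ε τ (qW m ε τ) 1

namespace CBHAux

variable (m : ℕ) (ε : ℂ) (τ : CGrp m)

/-- Forward map on generators. -/
def fB : FreeAlgebra ℂ (BGen m) →ₐ[ℂ] RingQuot (AffineRel m ε τ) :=
  FreeAlgebra.lift ℂ fun s => match s with
    | BGen.X => RingQuot.mkAlgHom ℂ (AffineRel m ε τ) (qX m ε τ)
    | BGen.Y => RingQuot.mkAlgHom ℂ (AffineRel m ε τ) (qY m ε τ)
    | BGen.G g => RingQuot.mkAlgHom ℂ (AffineRel m ε τ) (qG m ε τ g)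

lemma q_rel {a b : FreeAlgebra ℂ (QGen m)} (h : QRel m ε τ a b) :
    RingQuot.mkAlgHom ℂ (QRel m ε τ) a = RingQuot.mkAlgHom ℂ (QRel m ε τ) b :=
  RingQuot.mkAlgHom_rel ℂ h

lemma b_rel {a b : FreeAlgebra ℂ (BGen m)} (h : BRel m ε τ a b) :
    RingQuot.mkAlgHom ℂ (BRel m ε τ) a = RingQuot.mkAlgHom ℂ (BRel m ε τ) b :=
  RingQuot.mkAlgHom_rel ℂ h

lemma aff_z : RingQuot.mkAlgHom ℂ (AffineRel m ε τ) (qZ m ε τ) = 1 := by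
  have := RingQuot.mkAlgHom_rel ℂ (AffineRel.z (m := m) (ε := ε) (τ := τ))
  simpa using this

lemma aff_w : RingQuot.mkAlgHom ℂ (AffineRel m ε τ) (qW m ε τ) = 1 := by
  have := RingQuot.mkAlgHom_rel ℂ (AffineRel.w (m := m) (ε := ε) (τ := τ))
  simpa using this

lemma hom_ofGrp {A : Type*} [Semiring A] [Algebra ℂ A]
    (F : FreeAlgebra ℂ (BGen m) →ₐ[ℂ] A) (t : CGrp m) :
    F (ofGrp m t) = t.coeff.sum fun g a => a • F (FreeAlgebra.ι ℂ (BGen.G g)) := by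
  rw [ofGrp, map_finsuppSum]
  simp [map_smul]

lemma hom_ofGrpQ {A : Type*} [Semiring A] [Algebra ℂ A]
    (F : FreeAlgebra ℂ (QGen m) →ₐ[ℂ] A) (t : CGrp m) :
    F (ofGrpQ m t) = t.coeff.sum fun g a => a • F (FreeAlgebra.ι ℂ (QGen.G g)) := by
  rw [ofGrpQ, map_finsuppSum]
  simp [map_smul]

lemma fB_rel : ∀ ⦃a b : FreeAlgebra ℂ (BGen m)⦄, BRel m ε τ a b → fB m ε τ a = fB m ε τ b := by
  intro a b h
  induction h with
  | grp_mul g h =>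
      simp only [fB, map_mul, FreeAlgebra.lift_ι_apply]
      rw [← map_mul]
      exact congrArg _ (by simpa [qG, qgen, map_mul] using q_rel m ε τ (QRel.grp_mul g h))
  | grp_one =>
      simp only [fB, map_one, FreeAlgebra.lift_ι_apply]
      rw [show (1 : RingQuot (AffineRel m ε τ)) = RingQuot.mkAlgHom ℂ (AffineRel m ε τ) 1 from
        (map_one _).symm]
      exact congrArg _ (by simpa [qG, qgen] using q_rel m ε τ (QRel.grp_one (m := m) (ε := ε) (τ := τ)))
  | gx g =>
      simp only [fB, map_mul, map_smul, FreeAlgebra.lift_ι_apply]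
      rw [← map_mul, ← map_mul, ← map_smul]
      exact congrArg _ (by simpa [qG, qgen, qX, map_mul, map_smul] using q_rel m ε τ (QRel.gx g))
  | gy g =>
      simp only [fB, map_mul, map_smul, FreeAlgebra.lift_ι_apply]
      rw [← map_mul, ← map_mul, ← map_smul]
      exact congrArg _ (by simpa [qG, qgen, qY, map_mul, map_smul] using q_rel m ε τ (QRel.gy g))
  | comm =>
      simp only [fB, map_mul, map_add, FreeAlgebra.lift_ι_apply]
      have hq : (RingQuot.mkAlgHom ℂ (QRel m ε τ)) (FreeAlgebra.ι ℂ QGen.Y) *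
          (RingQuot.mkAlgHom ℂ (QRel m ε τ)) (FreeAlgebra.ι ℂ QGen.X) =
          (RingQuot.mkAlgHom ℂ (QRel m ε τ)) (FreeAlgebra.ι ℂ QGen.X) *
          (RingQuot.mkAlgHom ℂ (QRel m ε τ)) (FreeAlgebra.ι ℂ QGen.Y) +
          (RingQuot.mkAlgHom ℂ (QRel m ε τ)) (ofGrpQ m τ) * qZ m ε τ * qW m ε τ := by
        simpa [qZ, qW, qgen, map_mul, map_add] using q_rel m ε τ (QRel.comm (m := m) (ε := ε) (τ := τ))
      have := congrArg (RingQuot.mkAlgHom ℂ (AffineRel m ε τ)) (by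
        simpa [qX, qY, qgen, map_mul, map_add] using hq :
          qY m ε τ * qX m ε τ = qX m ε τ * qY m ε τ +
            (RingQuot.mkAlgHom ℂ (QRel m ε τ)) (ofGrpQ m τ) * qZ m ε τ * qW m ε τ)
      rw [map_mul, map_add, map_mul, map_mul, map_mul, aff_z, aff_w, mul_one, mul_one] at this
      rw [this]
      congr 1
      rw [ofGrp, ofGrpQ, map_finsuppSum, map_finsuppSum, map_finsuppSum]
      refine Finsupp.sum_congr fun g _ => ?_
      simp [qG, qgen, FreeAlgebra.lift_ι_apply]

def toA : CBH m ε τ →ₐ[ℂ] RingQuot (AffineRel m ε τ) :=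
  RingQuot.liftAlgHom ℂ ⟨fB m ε τ, fB_rel m ε τ⟩

/-- Backward map on generators. -/
def gQ : FreeAlgebra ℂ (QGen m) →ₐ[ℂ] CBH m ε τ :=
  FreeAlgebra.lift ℂ fun s => match s with
    | QGen.X => bX m ε τ
    | QGen.Y => bY m ε τ
    | QGen.Z => 1
    | QGen.W => 1
    | QGen.G g => bG m ε τ g

lemma gQ_rel : ∀ ⦃a b : FreeAlgebra ℂ (QGen m)⦄, QRel m ε τ a b → gQ m ε τ a = gQ m ε τ b := by
  intro a b h
  induction h with
  | grp_mul g h =>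
      simpa [gQ, map_mul, FreeAlgebra.lift_ι_apply, bG, map_mul] using
        (by simpa [bG, map_mul] using b_rel m ε τ (BRel.grp_mul g h) :
          bG m ε τ g * bG m ε τ h = bG m ε τ (g * h))
  | grp_one =>
      simpa [gQ, FreeAlgebra.lift_ι_apply, bG] using
        (by simpa [bG] using b_rel m ε τ (BRel.grp_one (m := m) (ε := ε) (τ := τ)))
  | gx g =>
      simp only [gQ, map_mul, map_smul, FreeAlgebra.lift_ι_apply]
      simpa [bG, bX, map_mul, map_smul] using b_rel m ε τ (BRel.gx g)
  | gy g =>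
      simp only [gQ, map_mul, map_smul, FreeAlgebra.lift_ι_apply]
      simpa [bG, bY, map_mul, map_smul] using b_rel m ε τ (BRel.gy g)
  | gz g => simp [gQ, map_mul, FreeAlgebra.lift_ι_apply]
  | gw g => simp [gQ, map_mul, FreeAlgebra.lift_ι_apply]
  | xz => simp [gQ, map_mul, FreeAlgebra.lift_ι_apply]
  | yz => simp [gQ, map_mul, FreeAlgebra.lift_ι_apply]
  | zw => simp [gQ, map_mul, FreeAlgebra.lift_ι_apply]
  | yw => simp [gQ, map_mul, FreeAlgebra.lift_ι_apply]
  | xw => simp [gQ, map_mul, FreeAlgebra.lift_ι_apply]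
  | comm =>
      simp only [gQ, map_mul, map_add, FreeAlgebra.lift_ι_apply, mul_one]
      have hb : bY m ε τ * bX m ε τ = bX m ε τ * bY m ε τ +
          (RingQuot.mkAlgHom ℂ (BRel m ε τ)) (ofGrp m τ) := by
        simpa [bX, bY, map_mul, map_add] using b_rel m ε τ (BRel.comm (m := m) (ε := ε) (τ := τ))
      rw [hb]
      congr 1
      rw [ofGrp, ofGrpQ, map_finsuppSum, map_finsuppSum]
      refine Finsupp.sum_congr fun g _ => ?_
      simp [bG, FreeAlgebra.lift_ι_apply]

def toB0 : NQuadric m ε τ →ₐ[ℂ] CBH m ε τ :=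
  RingQuot.liftAlgHom ℂ ⟨gQ m ε τ, gQ_rel m ε τ⟩

lemma toB0_rel : ∀ ⦃a b : NQuadric m ε τ⦄, AffineRel m ε τ a b → toB0 m ε τ a = toB0 m ε τ b := by
  rintro a b (h | h) <;>
    simp [toB0, qZ, qW, qgen, RingQuot.liftAlgHom_mkAlgHom_apply, gQ, FreeAlgebra.lift_ι_apply]

def toB : RingQuot (AffineRel m ε τ) →ₐ[ℂ] CBH m ε τ :=
  RingQuot.liftAlgHom ℂ ⟨toB0 m ε τ, toB0_rel m ε τ⟩

lemma toA_bX : toA m ε τ (bX m ε τ) = RingQuot.mkAlgHom ℂ (AffineRel m ε τ) (qX m ε τ) := by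
  simp [toA, bX, RingQuot.liftAlgHom_mkAlgHom_apply, fB, FreeAlgebra.lift_ι_apply]

lemma toA_bY : toA m ε τ (bY m ε τ) = RingQuot.mkAlgHom ℂ (AffineRel m ε τ) (qY m ε τ) := by
  simp [toA, bY, RingQuot.liftAlgHom_mkAlgHom_apply, fB, FreeAlgebra.lift_ι_apply]

lemma toA_bG (g : muGroup m) :
    toA m ε τ (bG m ε τ g) = RingQuot.mkAlgHom ℂ (AffineRel m ε τ) (qG m ε τ g) := by
  simp [toA, bG, RingQuot.liftAlgHom_mkAlgHom_apply, fB, FreeAlgebra.lift_ι_apply]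

lemma comp_BA : (toB m ε τ).comp (toA m ε τ) = AlgHom.id ℂ (CBH m ε τ) := by
  apply RingQuot.ringQuot_ext'
  apply FreeAlgebra.hom_ext
  funext s
  cases s <;>
    simp [toA, toB, toB0, RingQuot.liftAlgHom_mkAlgHom_apply, fB, gQ, FreeAlgebra.lift_ι_apply,
      qX, qY, qG, qgen, bX, bY, bG]

lemma comp_AB : (toA m ε τ).comp (toB m ε τ) = AlgHom.id ℂ (RingQuot (AffineRel m ε τ)) := by
  apply RingQuot.ringQuot_ext'
  apply RingQuot.ringQuot_ext'
  apply FreeAlgebra.hom_ext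
  funext s
  have hz := aff_z m ε τ
  have hw := aff_w m ε τ
  rw [qZ, qgen] at hz
  rw [qW, qgen] at hw
  cases s <;>
    simp [toA, toB, toB0, RingQuot.liftAlgHom_mkAlgHom_apply, fB, gQ, FreeAlgebra.lift_ι_apply,
      qX, qY, qZ, qW, qG, qgen, bX, bY, bG, hz, hw]

def theEquiv : CBH m ε τ ≃ₐ[ℂ] RingQuot (AffineRel m ε τ) :=
  AlgEquiv.ofAlgHom (toA m ε τ) (toB m ε τ) (comp_AB m ε τ) (comp_BA m ε τ)

end CBHAux

theorem cbh_iso_quadric_mod_z_w_eq_one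
    (m : ℕ) (hm : 0 < m) (ε : ℂ) (hε : IsPrimitiveRoot ε m) (τ : CGrp m) :
    ∃ f : CBH m ε τ ≃+* RingQuot (AffineRel m ε τ),
      f (bX m ε τ) = RingQuot.mkRingHom (AffineRel m ε τ) (qX m ε τ)
      ∧ f (bY m ε τ) = RingQuot.mkRingHom (AffineRel m ε τ) (qY m ε τ)
      ∧ ∀ g : muGroup m,
          f (bG m ε τ g) = RingQuot.mkRingHom (AffineRel m ε τ) (qG m ε τ g) := by
  refine ⟨(CBHAux.theEquiv m ε τ).toRingEquiv, ?_, ?_, fun g => ?_⟩ <;>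
    rw [← RingQuot.mkAlgHom_coe ℂ]
  · exact CBHAux.toA_bX m ε τ
  · exact CBHAux.toA_bY m ε τ
  · exact CBHAux.toA_bG m ε τ g

end
end

section
/- In the noncommutative quadric algebra Q, the elements z and w are central, and there are algebra isomorphisms Q/zQ ≅ (C[x] ⊗ C[y,w])#μ_m and Q/wQ ≅ (C[x,z] ⊗ C[y])#μ_m; in particular Q/zQ and Q/wQ are independent of τ. -/
/-!
STATEMENT 12: In the noncommutative quadric algebra `Q`, the elements `z` and
`w` are central, and there are algebra isomorphisms
`Q/zQ ≅ (ℂ[x] ⊗ ℂ[y,w])#μ_m` and `Q/wQ ≅ (ℂ[x,z] ⊗ ℂ[y])#μ_m`; in particular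
`Q/zQ` and `Q/wQ` are independent of `τ` (the right-hand sides do not involve
`τ`).  The isomorphisms match the generators.
-/

noncomputable section

/-- Generators of `(ℂ[x] ⊗ ℂ[y,w])#μ_m`. -/
inductive XYWGen (m : ℕ)
  | X : XYWGen m
  | Y : XYWGen m
  | W : XYWGen m
  | G : muGroup m → XYWGen m

/-- Relations of the smash product `(ℂ[x] ⊗ ℂ[y,w])#μ_m`: `x, y, w` pairwise
commute and `μ_m` acts by `γxγ⁻¹ = ε(γ)x`, `γyγ⁻¹ = ε(γ)⁻¹y`, `γwγ⁻¹ = w`. -/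
inductive XYWRel (m : ℕ) (ε : ℂ) :
    FreeAlgebra ℂ (XYWGen m) → FreeAlgebra ℂ (XYWGen m) → Prop
  | grp_mul (g h : muGroup m) :
      XYWRel m ε (FreeAlgebra.ι ℂ (XYWGen.G g) * FreeAlgebra.ι ℂ (XYWGen.G h))
        (FreeAlgebra.ι ℂ (XYWGen.G (g * h)))
  | grp_one : XYWRel m ε (FreeAlgebra.ι ℂ (XYWGen.G 1)) 1
  | gx (g : muGroup m) :
      XYWRel m ε (FreeAlgebra.ι ℂ (XYWGen.G g) * FreeAlgebra.ι ℂ XYWGen.X)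
        (chi m ε g • (FreeAlgebra.ι ℂ XYWGen.X * FreeAlgebra.ι ℂ (XYWGen.G g)))
  | gy (g : muGroup m) :
      XYWRel m ε (FreeAlgebra.ι ℂ (XYWGen.G g) * FreeAlgebra.ι ℂ XYWGen.Y)
        ((chi m ε g)⁻¹ •
          (FreeAlgebra.ι ℂ XYWGen.Y * FreeAlgebra.ι ℂ (XYWGen.G g)))
  | gw (g : muGroup m) :
      XYWRel m ε (FreeAlgebra.ι ℂ (XYWGen.G g) * FreeAlgebra.ι ℂ XYWGen.W)
        (FreeAlgebra.ι ℂ XYWGen.W * FreeAlgebra.ι ℂ (XYWGen.G g))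
  | xy : XYWRel m ε (FreeAlgebra.ι ℂ XYWGen.X * FreeAlgebra.ι ℂ XYWGen.Y)
        (FreeAlgebra.ι ℂ XYWGen.Y * FreeAlgebra.ι ℂ XYWGen.X)
  | xw : XYWRel m ε (FreeAlgebra.ι ℂ XYWGen.X * FreeAlgebra.ι ℂ XYWGen.W)
        (FreeAlgebra.ι ℂ XYWGen.W * FreeAlgebra.ι ℂ XYWGen.X)
  | yw : XYWRel m ε (FreeAlgebra.ι ℂ XYWGen.Y * FreeAlgebra.ι ℂ XYWGen.W)
        (FreeAlgebra.ι ℂ XYWGen.W * FreeAlgebra.ι ℂ XYWGen.Y)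

/-- Generators of `(ℂ[x,z] ⊗ ℂ[y])#μ_m`. -/
inductive XZYGen (m : ℕ)
  | X : XZYGen m
  | Z : XZYGen m
  | Y : XZYGen m
  | G : muGroup m → XZYGen m

/-- Relations of the smash product `(ℂ[x,z] ⊗ ℂ[y])#μ_m`. -/
inductive XZYRel (m : ℕ) (ε : ℂ) :
    FreeAlgebra ℂ (XZYGen m) → FreeAlgebra ℂ (XZYGen m) → Prop
  | grp_mul (g h : muGroup m) :
      XZYRel m ε (FreeAlgebra.ι ℂ (XZYGen.G g) * FreeAlgebra.ι ℂ (XZYGen.G h))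
        (FreeAlgebra.ι ℂ (XZYGen.G (g * h)))
  | grp_one : XZYRel m ε (FreeAlgebra.ι ℂ (XZYGen.G 1)) 1
  | gx (g : muGroup m) :
      XZYRel m ε (FreeAlgebra.ι ℂ (XZYGen.G g) * FreeAlgebra.ι ℂ XZYGen.X)
        (chi m ε g • (FreeAlgebra.ι ℂ XZYGen.X * FreeAlgebra.ι ℂ (XZYGen.G g)))
  | gy (g : muGroup m) :
      XZYRel m ε (FreeAlgebra.ι ℂ (XZYGen.G g) * FreeAlgebra.ι ℂ XZYGen.Y)
        ((chi m ε g)⁻¹ •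
          (FreeAlgebra.ι ℂ XZYGen.Y * FreeAlgebra.ι ℂ (XZYGen.G g)))
  | gz (g : muGroup m) :
      XZYRel m ε (FreeAlgebra.ι ℂ (XZYGen.G g) * FreeAlgebra.ι ℂ XZYGen.Z)
        (FreeAlgebra.ι ℂ XZYGen.Z * FreeAlgebra.ι ℂ (XZYGen.G g))
  | xy : XZYRel m ε (FreeAlgebra.ι ℂ XZYGen.X * FreeAlgebra.ι ℂ XZYGen.Y)
        (FreeAlgebra.ι ℂ XZYGen.Y * FreeAlgebra.ι ℂ XZYGen.X)
  | xz : XZYRel m ε (FreeAlgebra.ι ℂ XZYGen.X * FreeAlgebra.ι ℂ XZYGen.Z)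
        (FreeAlgebra.ι ℂ XZYGen.Z * FreeAlgebra.ι ℂ XZYGen.X)
  | yz : XZYRel m ε (FreeAlgebra.ι ℂ XZYGen.Y * FreeAlgebra.ι ℂ XZYGen.Z)
        (FreeAlgebra.ι ℂ XZYGen.Z * FreeAlgebra.ι ℂ XZYGen.Y)

/-- The relation `z = 0` on `Q`, presenting `Q/zQ`. -/
inductive ZRel (m : ℕ) (ε : ℂ) (τ : CGrp m) :
    NQuadric m ε τ → NQuadric m ε τ → Prop
  | z : ZRel m ε τ (qZ m ε τ) 0

/-- The relation `w = 0` on `Q`, presenting `Q/wQ`. -/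
inductive WRel (m : ℕ) (ε : ℂ) (τ : CGrp m) :
    NQuadric m ε τ → NQuadric m ε τ → Prop
  | w : WRel m ε τ (qW m ε τ) 0

section Aux

variable (m : ℕ) (ε : ℂ) (τ : CGrp m)

/-- Map a defining relation to an equality in `Q`. -/
lemma q_rel {a b : FreeAlgebra ℂ (QGen m)} (h : QRel m ε τ a b) :
    RingQuot.mkAlgHom ℂ (QRel m ε τ) a = RingQuot.mkAlgHom ℂ (QRel m ε τ) b :=
  RingQuot.mkAlgHom_rel ℂ h

def qT : NQuadric m ε τ := RingQuot.mkAlgHom ℂ (QRel m ε τ) (ofGrpQ m τ)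

lemma qG_mul (g h : muGroup m) : qG m ε τ g * qG m ε τ h = qG m ε τ (g * h) := by
  simpa only [map_mul, qG, qX, qY, qZ, qW, qT, qgen] using q_rel m ε τ (QRel.grp_mul g h)

lemma qG_one : qG m ε τ 1 = 1 := by
  simpa only [map_one, qG, qX, qY, qZ, qW, qT, qgen] using q_rel m ε τ QRel.grp_one

lemma qgx (g : muGroup m) :
    qG m ε τ g * qX m ε τ = chi m ε g • (qX m ε τ * qG m ε τ g) := by
  simpa only [map_mul, map_smul, qG, qX, qY, qZ, qW, qT, qgen] using q_rel m ε τ (QRel.gx g)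

lemma qgy (g : muGroup m) :
    qG m ε τ g * qY m ε τ = (chi m ε g)⁻¹ • (qY m ε τ * qG m ε τ g) := by
  simpa only [map_mul, map_smul, qG, qX, qY, qZ, qW, qT, qgen] using q_rel m ε τ (QRel.gy g)

lemma qgz (g : muGroup m) : qG m ε τ g * qZ m ε τ = qZ m ε τ * qG m ε τ g := by
  simpa only [map_mul, qG, qX, qY, qZ, qW, qT, qgen] using q_rel m ε τ (QRel.gz g)

lemma qgw (g : muGroup m) : qG m ε τ g * qW m ε τ = qW m ε τ * qG m ε τ g := by
  simpa only [map_mul, qG, qX, qY, qZ, qW, qT, qgen] using q_rel m ε τ (QRel.gw g)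

lemma qxz : qX m ε τ * qZ m ε τ = qZ m ε τ * qX m ε τ := by
  simpa only [map_mul, qG, qX, qY, qZ, qW, qT, qgen] using q_rel m ε τ QRel.xz

lemma qyz : qY m ε τ * qZ m ε τ = qZ m ε τ * qY m ε τ := by
  simpa only [map_mul, qG, qX, qY, qZ, qW, qT, qgen] using q_rel m ε τ QRel.yz

lemma qzw : qZ m ε τ * qW m ε τ = qW m ε τ * qZ m ε τ := by
  simpa only [map_mul, qG, qX, qY, qZ, qW, qT, qgen] using q_rel m ε τ QRel.zw

lemma qyw : qY m ε τ * qW m ε τ = qW m ε τ * qY m ε τ := by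
  simpa only [map_mul, qG, qX, qY, qZ, qW, qT, qgen] using q_rel m ε τ QRel.yw

lemma qxw : qX m ε τ * qW m ε τ = qW m ε τ * qX m ε τ := by
  simpa only [map_mul, qG, qX, qY, qZ, qW, qT, qgen] using q_rel m ε τ QRel.xw

lemma qcomm : qY m ε τ * qX m ε τ =
    qX m ε τ * qY m ε τ + qT m ε τ * qZ m ε τ * qW m ε τ := by
  simpa only [map_mul, map_add, qG, qX, qY, qZ, qW, qT, qgen] using q_rel m ε τ QRel.comm

/-! ### Centrality of `z` and `w` -/

lemma zw_central (q : NQuadric m ε τ) :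
    qZ m ε τ * q = q * qZ m ε τ ∧ qW m ε τ * q = q * qW m ε τ := by
  obtain ⟨a, rfl⟩ := RingQuot.mkAlgHom_surjective ℂ (QRel m ε τ) q
  induction a with
  | grade0 c =>
    simp only [AlgHom.commutes]
    exact ⟨(Algebra.commutes c _).symm, (Algebra.commutes c _).symm⟩
  | grade1 s =>
    cases s with
    | X => exact ⟨(qxz m ε τ).symm, (qxw m ε τ).symm⟩
    | Z => exact ⟨rfl, (qzw m ε τ).symm⟩
    | Y => exact ⟨(qyz m ε τ).symm, (qyw m ε τ).symm⟩
    | W => exact ⟨qzw m ε τ, rfl⟩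
    | G g => exact ⟨(qgz m ε τ g).symm, (qgw m ε τ g).symm⟩
  | mul a b ha hb =>
    rw [map_mul]
    exact ⟨by rw [← mul_assoc, ha.1, mul_assoc, hb.1, mul_assoc],
      by rw [← mul_assoc, ha.2, mul_assoc, hb.2, mul_assoc]⟩
  | add a b ha hb =>
    rw [map_add]
    exact ⟨by rw [mul_add, add_mul, ha.1, hb.1],
      by rw [mul_add, add_mul, ha.2, hb.2]⟩

/-! ### The isomorphism `Q/zQ ≅ (ℂ[x] ⊗ ℂ[y,w])#μ_m` -/

/-- Images of the `Q`-generators in `(ℂ[x] ⊗ ℂ[y,w])#μ_m` (`z ↦ 0`). -/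
def toXYW : QGen m → RingQuot (XYWRel m ε)
  | .X => RingQuot.mkAlgHom ℂ (XYWRel m ε) (FreeAlgebra.ι ℂ XYWGen.X)
  | .Z => 0
  | .Y => RingQuot.mkAlgHom ℂ (XYWRel m ε) (FreeAlgebra.ι ℂ XYWGen.Y)
  | .W => RingQuot.mkAlgHom ℂ (XYWRel m ε) (FreeAlgebra.ι ℂ XYWGen.W)
  | .G g => RingQuot.mkAlgHom ℂ (XYWRel m ε) (FreeAlgebra.ι ℂ (XYWGen.G g))

def F1 : FreeAlgebra ℂ (QGen m) →ₐ[ℂ] RingQuot (XYWRel m ε) :=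
  FreeAlgebra.lift ℂ (toXYW m ε)

lemma F1_rel : ∀ ⦃a b : FreeAlgebra ℂ (QGen m)⦄, QRel m ε τ a b →
    F1 m ε a = F1 m ε b := by
  intro a b h
  induction h with
  | grp_mul g h =>
    simpa only [F1, map_mul, FreeAlgebra.lift_ι_apply, toXYW] using
      RingQuot.mkAlgHom_rel ℂ (XYWRel.grp_mul (m := m) (ε := ε) g h)
  | grp_one =>
    simpa only [F1, map_one, FreeAlgebra.lift_ι_apply, toXYW] using
      RingQuot.mkAlgHom_rel ℂ (XYWRel.grp_one (m := m) (ε := ε))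
  | gx g =>
    simpa only [F1, map_mul, map_smul, FreeAlgebra.lift_ι_apply, toXYW] using
      RingQuot.mkAlgHom_rel ℂ (XYWRel.gx (m := m) (ε := ε) g)
  | gy g =>
    simpa only [F1, map_mul, map_smul, FreeAlgebra.lift_ι_apply, toXYW] using
      RingQuot.mkAlgHom_rel ℂ (XYWRel.gy (m := m) (ε := ε) g)
  | gz g => simp only [F1, map_mul, FreeAlgebra.lift_ι_apply, toXYW, mul_zero, zero_mul]
  | gw g =>
    simpa only [F1, map_mul, FreeAlgebra.lift_ι_apply, toXYW] using
      RingQuot.mkAlgHom_rel ℂ (XYWRel.gw (m := m) (ε := ε) g)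
  | xz => simp only [F1, map_mul, FreeAlgebra.lift_ι_apply, toXYW, mul_zero, zero_mul]
  | yz => simp only [F1, map_mul, FreeAlgebra.lift_ι_apply, toXYW, mul_zero, zero_mul]
  | zw => simp only [F1, map_mul, FreeAlgebra.lift_ι_apply, toXYW, mul_zero, zero_mul]
  | yw =>
    simpa only [F1, map_mul, FreeAlgebra.lift_ι_apply, toXYW] using
      RingQuot.mkAlgHom_rel ℂ (XYWRel.yw (m := m) (ε := ε))
  | xw =>
    simpa only [F1, map_mul, FreeAlgebra.lift_ι_apply, toXYW] using
      RingQuot.mkAlgHom_rel ℂ (XYWRel.xw (m := m) (ε := ε))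
  | comm =>
    simp only [F1, map_mul, map_add, FreeAlgebra.lift_ι_apply, toXYW, mul_zero, zero_mul,
      add_zero]
    simpa only [map_mul] using (RingQuot.mkAlgHom_rel ℂ (XYWRel.xy (m := m) (ε := ε))).symm

def G1 : NQuadric m ε τ →ₐ[ℂ] RingQuot (XYWRel m ε) :=
  RingQuot.liftAlgHom ℂ ⟨F1 m ε, F1_rel m ε τ⟩

lemma G1_apply (a : FreeAlgebra ℂ (QGen m)) :
    G1 m ε τ (RingQuot.mkAlgHom ℂ (QRel m ε τ) a) = F1 m ε a :=
  RingQuot.liftAlgHom_mkAlgHom_apply ℂ _ _ _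

lemma G1_qZ : G1 m ε τ (qZ m ε τ) = 0 := by
  rw [qZ, qgen, G1_apply]
  simp [F1, toXYW]

def H1 : RingQuot (ZRel m ε τ) →ₐ[ℂ] RingQuot (XYWRel m ε) :=
  RingQuot.liftAlgHom ℂ ⟨G1 m ε τ, by
    rintro _ _ ⟨⟩
    rw [G1_qZ, map_zero]⟩

lemma H1_apply (a : NQuadric m ε τ) :
    H1 m ε τ (RingQuot.mkAlgHom ℂ (ZRel m ε τ) a) = G1 m ε τ a :=
  RingQuot.liftAlgHom_mkAlgHom_apply ℂ _ _ _

/-- Images of the `XYW`-generators in `Q/zQ`. -/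
def toQz : XYWGen m → RingQuot (ZRel m ε τ)
  | .X => RingQuot.mkAlgHom ℂ (ZRel m ε τ) (qX m ε τ)
  | .Y => RingQuot.mkAlgHom ℂ (ZRel m ε τ) (qY m ε τ)
  | .W => RingQuot.mkAlgHom ℂ (ZRel m ε τ) (qW m ε τ)
  | .G g => RingQuot.mkAlgHom ℂ (ZRel m ε τ) (qG m ε τ g)

def F2 : FreeAlgebra ℂ (XYWGen m) →ₐ[ℂ] RingQuot (ZRel m ε τ) :=
  FreeAlgebra.lift ℂ (toQz m ε τ)

lemma Pz_qZ : RingQuot.mkAlgHom ℂ (ZRel m ε τ) (qZ m ε τ) = 0 := by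
  simpa only [map_zero] using RingQuot.mkAlgHom_rel ℂ (ZRel.z (m := m) (ε := ε) (τ := τ))

lemma F2_rel : ∀ ⦃a b : FreeAlgebra ℂ (XYWGen m)⦄, XYWRel m ε a b →
    F2 m ε τ a = F2 m ε τ b := by
  intro a b h
  induction h with
  | grp_mul g h =>
    simp only [F2, map_mul, FreeAlgebra.lift_ι_apply, toQz]
    rw [← map_mul, qG_mul]
  | grp_one =>
    simp only [F2, map_one, FreeAlgebra.lift_ι_apply, toQz]
    rw [qG_one, map_one]
  | gx g =>
    simp only [F2, map_mul, map_smul, FreeAlgebra.lift_ι_apply, toQz]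
    rw [← map_mul, ← map_mul, qgx, map_smul]
  | gy g =>
    simp only [F2, map_mul, map_smul, FreeAlgebra.lift_ι_apply, toQz]
    rw [← map_mul, ← map_mul, qgy, map_smul]
  | gw g =>
    simp only [F2, map_mul, FreeAlgebra.lift_ι_apply, toQz]
    rw [← map_mul, ← map_mul, qgw]
  | xy =>
    simp only [F2, map_mul, FreeAlgebra.lift_ι_apply, toQz]
    rw [← map_mul, ← map_mul, qcomm, map_add, map_mul, map_mul, map_mul, Pz_qZ,
      mul_zero, zero_mul, add_zero]
  | xw =>
    simp only [F2, map_mul, FreeAlgebra.lift_ι_apply, toQz]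
    rw [← map_mul, ← map_mul, qxw]
  | yw =>
    simp only [F2, map_mul, FreeAlgebra.lift_ι_apply, toQz]
    rw [← map_mul, ← map_mul, qyw]

def H2 : RingQuot (XYWRel m ε) →ₐ[ℂ] RingQuot (ZRel m ε τ) :=
  RingQuot.liftAlgHom ℂ ⟨F2 m ε τ, F2_rel m ε τ⟩

lemma H2_apply (a : FreeAlgebra ℂ (XYWGen m)) :
    H2 m ε τ (RingQuot.mkAlgHom ℂ (XYWRel m ε) a) = F2 m ε τ a :=
  RingQuot.liftAlgHom_mkAlgHom_apply ℂ _ _ _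

lemma H1_H2 : (H1 m ε τ).comp (H2 m ε τ) = AlgHom.id ℂ _ := by
  apply RingQuot.ringQuot_ext'
  apply FreeAlgebra.hom_ext
  funext s
  simp only [Function.comp_apply, AlgHom.coe_comp, AlgHom.coe_id, id_eq]
  rw [H2_apply]
  cases s <;>
    simp only [F2, FreeAlgebra.lift_ι_apply, toQz, qX, qY, qW, qG, qgen, H1_apply,
      G1_apply, F1, toXYW]

lemma H2_H1 : (H2 m ε τ).comp (H1 m ε τ) = AlgHom.id ℂ _ := by
  apply RingQuot.ringQuot_ext'
  apply RingQuot.ringQuot_ext'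
  apply FreeAlgebra.hom_ext
  funext s
  simp only [Function.comp_apply, AlgHom.coe_comp, AlgHom.coe_id, id_eq]
  rw [show (RingQuot.mkAlgHom ℂ (QRel m ε τ)) (FreeAlgebra.ι ℂ s) = qgen m ε τ s from rfl]
  cases s with
  | Z =>
    rw [show qgen m ε τ QGen.Z = qZ m ε τ from rfl, Pz_qZ, map_zero, map_zero]
  | X =>
    rw [show qgen m ε τ QGen.X = qX m ε τ from rfl, H1_apply]
    rw [show qX m ε τ = RingQuot.mkAlgHom ℂ (QRel m ε τ) (FreeAlgebra.ι ℂ QGen.X) from rfl,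
      G1_apply]
    simp only [F1, FreeAlgebra.lift_ι_apply, toXYW, H2_apply, F2, toQz]
    rfl
  | Y =>
    rw [show qgen m ε τ QGen.Y = qY m ε τ from rfl, H1_apply]
    rw [show qY m ε τ = RingQuot.mkAlgHom ℂ (QRel m ε τ) (FreeAlgebra.ι ℂ QGen.Y) from rfl,
      G1_apply]
    simp only [F1, FreeAlgebra.lift_ι_apply, toXYW, H2_apply, F2, toQz]
    rfl
  | W =>
    rw [show qgen m ε τ QGen.W = qW m ε τ from rfl, H1_apply]
    rw [show qW m ε τ = RingQuot.mkAlgHom ℂ (QRel m ε τ) (FreeAlgebra.ι ℂ QGen.W) from rfl,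
      G1_apply]
    simp only [F1, FreeAlgebra.lift_ι_apply, toXYW, H2_apply, F2, toQz]
    rfl
  | G g =>
    rw [show qgen m ε τ (QGen.G g) = qG m ε τ g from rfl, H1_apply]
    rw [show qG m ε τ g = RingQuot.mkAlgHom ℂ (QRel m ε τ) (FreeAlgebra.ι ℂ (QGen.G g))
      from rfl, G1_apply]
    simp only [F1, FreeAlgebra.lift_ι_apply, toXYW, H2_apply, F2, toQz]
    rfl

def zEquiv : RingQuot (ZRel m ε τ) ≃ₐ[ℂ] RingQuot (XYWRel m ε) :=
  AlgEquiv.ofAlgHom (H1 m ε τ) (H2 m ε τ) (H1_H2 m ε τ) (H2_H1 m ε τ)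

/-! ### The isomorphism `Q/wQ ≅ (ℂ[x,z] ⊗ ℂ[y])#μ_m` -/

/-- Images of the `Q`-generators in `(ℂ[x,z] ⊗ ℂ[y])#μ_m` (`w ↦ 0`). -/
def toXZY : QGen m → RingQuot (XZYRel m ε)
  | .X => RingQuot.mkAlgHom ℂ (XZYRel m ε) (FreeAlgebra.ι ℂ XZYGen.X)
  | .Z => RingQuot.mkAlgHom ℂ (XZYRel m ε) (FreeAlgebra.ι ℂ XZYGen.Z)
  | .Y => RingQuot.mkAlgHom ℂ (XZYRel m ε) (FreeAlgebra.ι ℂ XZYGen.Y)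
  | .W => 0
  | .G g => RingQuot.mkAlgHom ℂ (XZYRel m ε) (FreeAlgebra.ι ℂ (XZYGen.G g))

def F3 : FreeAlgebra ℂ (QGen m) →ₐ[ℂ] RingQuot (XZYRel m ε) :=
  FreeAlgebra.lift ℂ (toXZY m ε)

lemma F3_rel : ∀ ⦃a b : FreeAlgebra ℂ (QGen m)⦄, QRel m ε τ a b →
    F3 m ε a = F3 m ε b := by
  intro a b h
  induction h with
  | grp_mul g h =>
    simpa only [F3, map_mul, FreeAlgebra.lift_ι_apply, toXZY] using
      RingQuot.mkAlgHom_rel ℂ (XZYRel.grp_mul (m := m) (ε := ε) g h)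
  | grp_one =>
    simpa only [F3, map_one, FreeAlgebra.lift_ι_apply, toXZY] using
      RingQuot.mkAlgHom_rel ℂ (XZYRel.grp_one (m := m) (ε := ε))
  | gx g =>
    simpa only [F3, map_mul, map_smul, FreeAlgebra.lift_ι_apply, toXZY] using
      RingQuot.mkAlgHom_rel ℂ (XZYRel.gx (m := m) (ε := ε) g)
  | gy g =>
    simpa only [F3, map_mul, map_smul, FreeAlgebra.lift_ι_apply, toXZY] using
      RingQuot.mkAlgHom_rel ℂ (XZYRel.gy (m := m) (ε := ε) g)
  | gz g =>
    simpa only [F3, map_mul, FreeAlgebra.lift_ι_apply, toXZY] using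
      RingQuot.mkAlgHom_rel ℂ (XZYRel.gz (m := m) (ε := ε) g)
  | gw g => simp only [F3, map_mul, FreeAlgebra.lift_ι_apply, toXZY, mul_zero, zero_mul]
  | xz =>
    simpa only [F3, map_mul, FreeAlgebra.lift_ι_apply, toXZY] using
      RingQuot.mkAlgHom_rel ℂ (XZYRel.xz (m := m) (ε := ε))
  | yz =>
    simpa only [F3, map_mul, FreeAlgebra.lift_ι_apply, toXZY] using
      RingQuot.mkAlgHom_rel ℂ (XZYRel.yz (m := m) (ε := ε))
  | zw => simp only [F3, map_mul, FreeAlgebra.lift_ι_apply, toXZY, mul_zero, zero_mul]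
  | yw => simp only [F3, map_mul, FreeAlgebra.lift_ι_apply, toXZY, mul_zero, zero_mul]
  | xw => simp only [F3, map_mul, FreeAlgebra.lift_ι_apply, toXZY, mul_zero, zero_mul]
  | comm =>
    simp only [F3, map_mul, map_add, FreeAlgebra.lift_ι_apply, toXZY, mul_zero, zero_mul,
      add_zero]
    simpa only [map_mul] using (RingQuot.mkAlgHom_rel ℂ (XZYRel.xy (m := m) (ε := ε))).symm

def G3 : NQuadric m ε τ →ₐ[ℂ] RingQuot (XZYRel m ε) :=
  RingQuot.liftAlgHom ℂ ⟨F3 m ε, F3_rel m ε τ⟩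

lemma G3_apply (a : FreeAlgebra ℂ (QGen m)) :
    G3 m ε τ (RingQuot.mkAlgHom ℂ (QRel m ε τ) a) = F3 m ε a :=
  RingQuot.liftAlgHom_mkAlgHom_apply ℂ _ _ _

lemma G3_qW : G3 m ε τ (qW m ε τ) = 0 := by
  rw [qW, qgen, G3_apply]
  simp [F3, toXZY]

def H3 : RingQuot (WRel m ε τ) →ₐ[ℂ] RingQuot (XZYRel m ε) :=
  RingQuot.liftAlgHom ℂ ⟨G3 m ε τ, by
    rintro _ _ ⟨⟩
    rw [G3_qW, map_zero]⟩

lemma H3_apply (a : NQuadric m ε τ) :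
    H3 m ε τ (RingQuot.mkAlgHom ℂ (WRel m ε τ) a) = G3 m ε τ a :=
  RingQuot.liftAlgHom_mkAlgHom_apply ℂ _ _ _

/-- Images of the `XZY`-generators in `Q/wQ`. -/
def toQw : XZYGen m → RingQuot (WRel m ε τ)
  | .X => RingQuot.mkAlgHom ℂ (WRel m ε τ) (qX m ε τ)
  | .Z => RingQuot.mkAlgHom ℂ (WRel m ε τ) (qZ m ε τ)
  | .Y => RingQuot.mkAlgHom ℂ (WRel m ε τ) (qY m ε τ)
  | .G g => RingQuot.mkAlgHom ℂ (WRel m ε τ) (qG m ε τ g)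

def F4 : FreeAlgebra ℂ (XZYGen m) →ₐ[ℂ] RingQuot (WRel m ε τ) :=
  FreeAlgebra.lift ℂ (toQw m ε τ)

lemma Pw_qW : RingQuot.mkAlgHom ℂ (WRel m ε τ) (qW m ε τ) = 0 := by
  simpa only [map_zero] using RingQuot.mkAlgHom_rel ℂ (WRel.w (m := m) (ε := ε) (τ := τ))

lemma F4_rel : ∀ ⦃a b : FreeAlgebra ℂ (XZYGen m)⦄, XZYRel m ε a b →
    F4 m ε τ a = F4 m ε τ b := by
  intro a b h
  induction h with
  | grp_mul g h =>
    simp only [F4, map_mul, FreeAlgebra.lift_ι_apply, toQw]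
    rw [← map_mul, qG_mul]
  | grp_one =>
    simp only [F4, map_one, FreeAlgebra.lift_ι_apply, toQw]
    rw [qG_one, map_one]
  | gx g =>
    simp only [F4, map_mul, map_smul, FreeAlgebra.lift_ι_apply, toQw]
    rw [← map_mul, ← map_mul, qgx, map_smul]
  | gy g =>
    simp only [F4, map_mul, map_smul, FreeAlgebra.lift_ι_apply, toQw]
    rw [← map_mul, ← map_mul, qgy, map_smul]
  | gz g =>
    simp only [F4, map_mul, FreeAlgebra.lift_ι_apply, toQw]
    rw [← map_mul, ← map_mul, qgz]
  | xy =>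
    simp only [F4, map_mul, FreeAlgebra.lift_ι_apply, toQw]
    rw [← map_mul, ← map_mul, qcomm, map_add, map_mul, map_mul, map_mul, Pw_qW,
      mul_zero, add_zero]
  | xz =>
    simp only [F4, map_mul, FreeAlgebra.lift_ι_apply, toQw]
    rw [← map_mul, ← map_mul, qxz]
  | yz =>
    simp only [F4, map_mul, FreeAlgebra.lift_ι_apply, toQw]
    rw [← map_mul, ← map_mul, qyz]

def H4 : RingQuot (XZYRel m ε) →ₐ[ℂ] RingQuot (WRel m ε τ) :=
  RingQuot.liftAlgHom ℂ ⟨F4 m ε τ, F4_rel m ε τ⟩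

lemma H4_apply (a : FreeAlgebra ℂ (XZYGen m)) :
    H4 m ε τ (RingQuot.mkAlgHom ℂ (XZYRel m ε) a) = F4 m ε τ a :=
  RingQuot.liftAlgHom_mkAlgHom_apply ℂ _ _ _

lemma H3_H4 : (H3 m ε τ).comp (H4 m ε τ) = AlgHom.id ℂ _ := by
  apply RingQuot.ringQuot_ext'
  apply FreeAlgebra.hom_ext
  funext s
  simp only [Function.comp_apply, AlgHom.coe_comp, AlgHom.coe_id, id_eq]
  rw [H4_apply]
  cases s <;>
    simp only [F4, FreeAlgebra.lift_ι_apply, toQw, qX, qY, qZ, qG, qgen, H3_apply,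
      G3_apply, F3, toXZY]

lemma H4_H3 : (H4 m ε τ).comp (H3 m ε τ) = AlgHom.id ℂ _ := by
  apply RingQuot.ringQuot_ext'
  apply RingQuot.ringQuot_ext'
  apply FreeAlgebra.hom_ext
  funext s
  simp only [Function.comp_apply, AlgHom.coe_comp, AlgHom.coe_id, id_eq]
  rw [show (RingQuot.mkAlgHom ℂ (QRel m ε τ)) (FreeAlgebra.ι ℂ s) = qgen m ε τ s from rfl]
  cases s with
  | W =>
    rw [show qgen m ε τ QGen.W = qW m ε τ from rfl, Pw_qW, map_zero, map_zero]
  | X =>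
    rw [show qgen m ε τ QGen.X = qX m ε τ from rfl, H3_apply]
    rw [show qX m ε τ = RingQuot.mkAlgHom ℂ (QRel m ε τ) (FreeAlgebra.ι ℂ QGen.X) from rfl,
      G3_apply]
    simp only [F3, FreeAlgebra.lift_ι_apply, toXZY, H4_apply, F4, toQw]
    rfl
  | Y =>
    rw [show qgen m ε τ QGen.Y = qY m ε τ from rfl, H3_apply]
    rw [show qY m ε τ = RingQuot.mkAlgHom ℂ (QRel m ε τ) (FreeAlgebra.ι ℂ QGen.Y) from rfl,
      G3_apply]
    simp only [F3, FreeAlgebra.lift_ι_apply, toXZY, H4_apply, F4, toQw]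
    rfl
  | Z =>
    rw [show qgen m ε τ QGen.Z = qZ m ε τ from rfl, H3_apply]
    rw [show qZ m ε τ = RingQuot.mkAlgHom ℂ (QRel m ε τ) (FreeAlgebra.ι ℂ QGen.Z) from rfl,
      G3_apply]
    simp only [F3, FreeAlgebra.lift_ι_apply, toXZY, H4_apply, F4, toQw]
    rfl
  | G g =>
    rw [show qgen m ε τ (QGen.G g) = qG m ε τ g from rfl, H3_apply]
    rw [show qG m ε τ g = RingQuot.mkAlgHom ℂ (QRel m ε τ) (FreeAlgebra.ι ℂ (QGen.G g))
      from rfl, G3_apply]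
    simp only [F3, FreeAlgebra.lift_ι_apply, toXZY, H4_apply, F4, toQw]
    rfl

def wEquiv : RingQuot (WRel m ε τ) ≃ₐ[ℂ] RingQuot (XZYRel m ε) :=
  AlgEquiv.ofAlgHom (H3 m ε τ) (H4 m ε τ) (H3_H4 m ε τ) (H4_H3 m ε τ)

end Aux

theorem z_w_central_and_quotients_of_quadric
    (m : ℕ) (hm : 0 < m) (ε : ℂ) (hε : IsPrimitiveRoot ε m) (τ : CGrp m) :
    (∀ q : NQuadric m ε τ, qZ m ε τ * q = q * qZ m ε τ
        ∧ qW m ε τ * q = q * qW m ε τ)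
    ∧ (∃ f : RingQuot (ZRel m ε τ) ≃+* RingQuot (XYWRel m ε),
        f (RingQuot.mkRingHom (ZRel m ε τ) (qX m ε τ)) =
          RingQuot.mkAlgHom ℂ (XYWRel m ε) (FreeAlgebra.ι ℂ XYWGen.X)
        ∧ f (RingQuot.mkRingHom (ZRel m ε τ) (qY m ε τ)) =
          RingQuot.mkAlgHom ℂ (XYWRel m ε) (FreeAlgebra.ι ℂ XYWGen.Y)
        ∧ f (RingQuot.mkRingHom (ZRel m ε τ) (qW m ε τ)) =
          RingQuot.mkAlgHom ℂ (XYWRel m ε) (FreeAlgebra.ι ℂ XYWGen.W)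
        ∧ ∀ g : muGroup m,
            f (RingQuot.mkRingHom (ZRel m ε τ) (qG m ε τ g)) =
              RingQuot.mkAlgHom ℂ (XYWRel m ε) (FreeAlgebra.ι ℂ (XYWGen.G g)))
    ∧ (∃ f : RingQuot (WRel m ε τ) ≃+* RingQuot (XZYRel m ε),
        f (RingQuot.mkRingHom (WRel m ε τ) (qX m ε τ)) =
          RingQuot.mkAlgHom ℂ (XZYRel m ε) (FreeAlgebra.ι ℂ XZYGen.X)
        ∧ f (RingQuot.mkRingHom (WRel m ε τ) (qY m ε τ)) =
          RingQuot.mkAlgHom ℂ (XZYRel m ε) (FreeAlgebra.ι ℂ XZYGen.Y)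
        ∧ f (RingQuot.mkRingHom (WRel m ε τ) (qZ m ε τ)) =
          RingQuot.mkAlgHom ℂ (XZYRel m ε) (FreeAlgebra.ι ℂ XZYGen.Z)
        ∧ ∀ g : muGroup m,
            f (RingQuot.mkRingHom (WRel m ε τ) (qG m ε τ g)) =
              RingQuot.mkAlgHom ℂ (XZYRel m ε) (FreeAlgebra.ι ℂ (XZYGen.G g))) := by
  have zeq : ∀ a : NQuadric m ε τ,
      (zEquiv m ε τ).toRingEquiv (RingQuot.mkRingHom (ZRel m ε τ) a) =
        H1 m ε τ (RingQuot.mkAlgHom ℂ (ZRel m ε τ) a) := by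
    intro a; rw [← RingQuot.mkAlgHom_coe ℂ]; rfl
  have weq : ∀ a : NQuadric m ε τ,
      (wEquiv m ε τ).toRingEquiv (RingQuot.mkRingHom (WRel m ε τ) a) =
        H3 m ε τ (RingQuot.mkAlgHom ℂ (WRel m ε τ) a) := by
    intro a; rw [← RingQuot.mkAlgHom_coe ℂ]; rfl
  refine ⟨zw_central m ε τ,
    ⟨(zEquiv m ε τ).toRingEquiv, ?_, ?_, ?_, fun g => ?_⟩,
    ⟨(wEquiv m ε τ).toRingEquiv, ?_, ?_, ?_, fun g => ?_⟩⟩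
  · rw [zeq, H1_apply,
      show qX m ε τ = RingQuot.mkAlgHom ℂ (QRel m ε τ) (FreeAlgebra.ι ℂ QGen.X) from rfl,
      G1_apply]
    simp [F1, toXYW]
  · rw [zeq, H1_apply,
      show qY m ε τ = RingQuot.mkAlgHom ℂ (QRel m ε τ) (FreeAlgebra.ι ℂ QGen.Y) from rfl,
      G1_apply]
    simp [F1, toXYW]
  · rw [zeq, H1_apply,
      show qW m ε τ = RingQuot.mkAlgHom ℂ (QRel m ε τ) (FreeAlgebra.ι ℂ QGen.W) from rfl,
      G1_apply]
    simp [F1, toXYW]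
  · rw [zeq, H1_apply,
      show qG m ε τ g = RingQuot.mkAlgHom ℂ (QRel m ε τ) (FreeAlgebra.ι ℂ (QGen.G g))
        from rfl,
      G1_apply]
    simp [F1, toXYW]
  · rw [weq, H3_apply,
      show qX m ε τ = RingQuot.mkAlgHom ℂ (QRel m ε τ) (FreeAlgebra.ι ℂ QGen.X) from rfl,
      G3_apply]
    simp [F3, toXZY]
  · rw [weq, H3_apply,
      show qY m ε τ = RingQuot.mkAlgHom ℂ (QRel m ε τ) (FreeAlgebra.ι ℂ QGen.Y) from rfl,
      G3_apply]
    simp [F3, toXZY]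
  · rw [weq, H3_apply,
      show qZ m ε τ = RingQuot.mkAlgHom ℂ (QRel m ε τ) (FreeAlgebra.ι ℂ QGen.Z) from rfl,
      G3_apply]
    simp [F3, toXZY]
  · rw [weq, H3_apply,
      show qG m ε τ g = RingQuot.mkAlgHom ℂ (QRel m ε τ) (FreeAlgebra.ι ℂ (QGen.G g))
        from rfl,
      G3_apply]
    simp [F3, toXZY]

end
end

section
/- Ker p_μ(x) = Ker(x − μ) ⊗_{CΓ_μ} CΓ for any right B_τ-module M on which x acts: that is, the kernel of p_μ(x) on M decomposes as ⊕_{γ ∈ Γ/Γ_μ} Ker(x − μ)·γ^{-1}, where Γ acts on M via CΓ ⊂ B_τ. -/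
/-!
STATEMENT 16: For any right `B_τ`-module `M`,
`Ker p_μ(x) = Ker(x − μ) ⊗_{ℂΓ_μ} ℂΓ`; i.e. the kernel of `p_μ(x)` on `M`
decomposes as the (internal) direct sum `⊕_{γ ∈ Γ/Γ_μ} Ker(x − μ)·γ^{-1}`,
where `Γ = μ_m` acts on `M` via `ℂΓ ⊂ B_τ`, `Γ_μ` is the stabilizer of `μ`
(under `γ·μ = ε(γ)μ`), and `p_μ(x) = x^m − μ^m` if `μ ≠ 0`, `p_0(x) = x`.
-/

noncomputable section

lemma chi_mul (m : ℕ) (hm : 0 < m) (ε : ℂ) (hε : ε ^ m = 1) (g h : muGroup m) :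
    chi m ε (g * h) = chi m ε g * chi m ε h := by
  haveI : NeZero m := ⟨hm.ne'⟩
  have key : ∀ n : ℕ, ε ^ n = ε ^ (n % m) := by
    intro n
    conv_lhs => rw [← Nat.div_add_mod n m]
    rw [pow_add, pow_mul, hε, one_pow, one_mul]
  show ε ^ (Multiplicative.toAdd g + Multiplicative.toAdd h).val = _
  rw [ZMod.val_add, ← key, pow_add]
  rfl

lemma chi_one (m : ℕ) (hm : 0 < m) (ε : ℂ) : chi m ε 1 = 1 := by
  haveI : NeZero m := ⟨hm.ne'⟩
  show ε ^ (0 : ZMod m).val = 1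
  rw [ZMod.val_zero, pow_zero]

/-- The stabilizer `Γ_μ` of `μ` in `Γ = μ_m` (acting by `γ·μ = ε(γ)μ`). -/
def stab (m : ℕ) (hm : 0 < m) (ε : ℂ) (hε : ε ^ m = 1) (μ : ℂ) :
    Subgroup (muGroup m) where
  carrier := {g | chi m ε g * μ = μ}
  mul_mem' := by
    intro g h hg hh
    simp only [Set.mem_setOf_eq] at *
    rw [chi_mul m hm ε hε, mul_assoc, hh, hg]
  one_mem' := by
    simp only [Set.mem_setOf_eq]
    rw [chi_one m hm ε, one_mul]
  inv_mem' := by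
    intro g hg
    simp only [Set.mem_setOf_eq] at *
    conv_lhs => rw [← hg]
    rw [← mul_assoc, ← chi_mul m hm ε hε, inv_mul_cancel, chi_one m hm ε,
      one_mul]

/-- The minimal `Γ`-semiinvariant polynomial `p_μ` vanishing on the orbit
`Γ·μ`, as an element of `B_τ`. -/
def pmu (m : ℕ) (ε : ℂ) (τ : CGrp m) (μ : ℂ) : CBH m ε τ :=
  if μ = 0 then bX m ε τ
  else bX m ε τ ^ m - algebraMap ℂ (CBH m ε τ) (μ ^ m)

/-- The kernel of the right action of an element `b ∈ B_τ` on a right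
`B_τ`-module `M`, as an additive subgroup. -/
def kerOf (m : ℕ) (ε : ℂ) (τ : CGrp m) (b : CBH m ε τ) (M : Type*)
    [AddCommGroup M] [Module (CBH m ε τ)ᵐᵒᵖ M] : AddSubgroup M where
  carrier := {v | MulOpposite.op b • v = 0}
  add_mem' := by
    intro a c ha hc
    simp only [Set.mem_setOf_eq] at *
    rw [smul_add, ha, hc, add_zero]
  zero_mem' := smul_zero _
  neg_mem' := by
    intro a ha
    simp only [Set.mem_setOf_eq] at *
    rw [smul_neg, ha, neg_zero]

/-- The translate `Ker(x−μ)·γ⁻¹` of `Ker(x−μ)` by the right action of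
`γ⁻¹ ∈ Γ`. -/
def kerTranslate (m : ℕ) (ε : ℂ) (τ : CGrp m) (μ : ℂ) (M : Type*)
    [AddCommGroup M] [Module (CBH m ε τ)ᵐᵒᵖ M] (g : muGroup m) :
    AddSubgroup M :=
  AddSubgroup.map
    (AddMonoidHom.mk' (fun v => MulOpposite.op (bG m ε τ g⁻¹) • v)
      (fun a b => smul_add _ a b))
    (kerOf m ε τ (bX m ε τ - algebraMap ℂ (CBH m ε τ) μ) M)


section Aux

open MulOpposite Polynomial

variable (m : ℕ) (ε : ℂ) (τ : CGrp m)

lemma bG_mul (g h : muGroup m) : bG m ε τ g * bG m ε τ h = bG m ε τ (g * h) := by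
  have := RingQuot.mkAlgHom_rel ℂ (BRel.grp_mul (m := m) (ε := ε) (τ := τ) g h)
  simpa only [map_mul, bG] using this

lemma bG_one : bG m ε τ 1 = 1 := by
  have := RingQuot.mkAlgHom_rel ℂ (BRel.grp_one (m := m) (ε := ε) (τ := τ))
  simpa only [map_one, bG] using this

lemma bG_bX (g : muGroup m) :
    bG m ε τ g * bX m ε τ
      = algebraMap ℂ (CBH m ε τ) (chi m ε g) * (bX m ε τ * bG m ε τ g) := by
  have := RingQuot.mkAlgHom_rel ℂ (BRel.gx (m := m) (ε := ε) (τ := τ) g)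
  simpa only [map_mul, map_smul, Algebra.smul_def, AlgHom.commutes, bG, bX] using this

lemma chi_mul_inv (hm : 0 < m) (hε : ε ^ m = 1) (g : muGroup m) :
    chi m ε g * chi m ε g⁻¹ = 1 := by
  rw [← chi_mul m hm ε hε, mul_inv_cancel, chi_one m hm]

lemma key_rel (g : muGroup m) (c : ℂ) :
    bG m ε τ g * (bX m ε τ - algebraMap ℂ (CBH m ε τ) (chi m ε g * c))
      = algebraMap ℂ (CBH m ε τ) (chi m ε g)
          * ((bX m ε τ - algebraMap ℂ (CBH m ε τ) c) * bG m ε τ g) := by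
  rw [mul_sub, sub_mul, mul_sub, bG_bX]
  congr 1
  rw [← mul_assoc, ← map_mul]
  exact Algebra.commutes _ _ |>.symm

lemma central_shift (a : ℂ) (z u : CBH m ε τ) :
    algebraMap ℂ (CBH m ε τ) a * (z * u) = z * (algebraMap ℂ (CBH m ε τ) a * u) := by
  rw [← mul_assoc, Algebra.commutes, mul_assoc]

lemma op_mul_smul {M : Type*} [AddCommGroup M] [Module (CBH m ε τ)ᵐᵒᵖ M]
    (x y : CBH m ε τ) (v : M) :
    MulOpposite.op (x * y) • v = MulOpposite.op y • (MulOpposite.op x • v) := by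
  rw [MulOpposite.op_mul, mul_smul]

lemma kerTranslate_eq (hm : 0 < m) (hε : ε ^ m = 1) (μ : ℂ) (M : Type*)
    [AddCommGroup M] [Module (CBH m ε τ)ᵐᵒᵖ M] (g : muGroup m) :
    kerTranslate m ε τ μ M g
      = kerOf m ε τ (bX m ε τ - algebraMap ℂ (CBH m ε τ) (chi m ε g⁻¹ * μ)) M := by
  ext v
  simp only [kerTranslate, AddSubgroup.mem_map, AddMonoidHom.mk'_apply]
  constructor
  · rintro ⟨w, hw, rfl⟩
    have hw' : MulOpposite.op (bX m ε τ - algebraMap ℂ (CBH m ε τ) μ) • w = 0 := hw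
    show MulOpposite.op (bX m ε τ - algebraMap ℂ (CBH m ε τ) (chi m ε g⁻¹ * μ)) •
      (MulOpposite.op (bG m ε τ g⁻¹) • w) = 0
    rw [← op_mul_smul, key_rel, central_shift, op_mul_smul, hw', smul_zero]
  · intro hv
    have hv' : MulOpposite.op (bX m ε τ - algebraMap ℂ (CBH m ε τ) (chi m ε g⁻¹ * μ)) • v = 0 := hv
    refine ⟨MulOpposite.op (bG m ε τ g) • v, ?_, ?_⟩
    · show MulOpposite.op (bX m ε τ - algebraMap ℂ (CBH m ε τ) μ) •
        (MulOpposite.op (bG m ε τ g) • v) = 0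
      rw [← op_mul_smul]
      have h0 : chi m ε g * (chi m ε g⁻¹ * μ) = μ := by
        rw [← mul_assoc, chi_mul_inv m ε hm hε, one_mul]
      have hk := key_rel m ε τ g (chi m ε g⁻¹ * μ)
      rw [h0] at hk
      rw [hk, central_shift, op_mul_smul, hv', smul_zero]
    · rw [← op_mul_smul, bG_mul, mul_inv_cancel, bG_one, MulOpposite.op_one, one_smul]

end Aux

section Generic

open Polynomial

lemma toAddSubgroup_iSup {R N : Type*} [Ring R] [AddCommGroup N] [Module R N]
    {ι : Sort*} (p : ι → Submodule R N) :
    (⨆ i, p i).toAddSubgroup = ⨆ i, (p i).toAddSubgroup := by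
  refine le_antisymm ?_ (iSup_le fun i x hx => le_iSup p i hx)
  intro x hx
  have hx' : x ∈ (⨆ i, p i).toAddSubmonoid := hx
  rw [Submodule.iSup_toAddSubmonoid] at hx'
  have hle : (⨆ i, (p i).toAddSubmonoid)
      ≤ (⨆ i, (p i).toAddSubgroup).toAddSubmonoid := by
    refine iSup_le fun i y hy => ?_
    rw [AddSubgroup.mem_toAddSubmonoid]
    exact le_iSup (fun i => (p i).toAddSubgroup) i hy
  simpa using hle hx'

lemma iSupIndep_toAddSubgroup {R N : Type*} [Ring R] [AddCommGroup N] [Module R N]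
    {ι : Type*} {p : ι → Submodule R N} (h : iSupIndep p) :
    iSupIndep fun i => (p i).toAddSubgroup := by
  intro i
  rw [disjoint_iff_inf_le]
  intro x hx
  obtain ⟨h1, h2⟩ := AddSubgroup.mem_inf.1 hx
  have hkey : (⨆ j, ⨆ (_ : j ≠ i), (p j).toAddSubgroup)
      = (⨆ j, ⨆ (_ : j ≠ i), p j).toAddSubgroup := by
    simp_rw [toAddSubgroup_iSup]
  rw [hkey, Submodule.mem_toAddSubgroup] at h2
  have hd := h i
  rw [disjoint_iff_inf_le] at hd
  have h0 : x ∈ (⊥ : Submodule R N) := hd (Submodule.mem_inf.2 ⟨h1, h2⟩)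
  simpa using h0

lemma ker_aeval_prod {V : Type*} [AddCommGroup V] [Module ℂ V]
    (f : Module.End ℂ V) (s : Finset ℕ) (c : ℕ → ℂ) (hc : Set.InjOn c s) :
    LinearMap.ker (Polynomial.aeval f (∏ i ∈ s, (X - C (c i))))
      = ⨆ i ∈ s, LinearMap.ker (f - c i • 1) := by
  classical
  induction s using Finset.induction_on with
  | empty =>
    rw [Finset.prod_empty, map_one]
    simp [Module.End.one_eq_id]
  | @insert a s ha ih =>
    have hc' : Set.InjOn c s := hc.mono (by simp [Finset.subset_insert])
    have hcop : IsCoprime (X - C (c a)) (∏ i ∈ s, (X - C (c i))) := by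
      refine IsCoprime.prod_right fun i hi => ?_
      refine Polynomial.isCoprime_X_sub_C_of_isUnit_sub ?_
      have hne : c a ≠ c i := by
        intro hcontra
        exact ha (by
          have := hc (by simp) (by simp [hi]) hcontra
          rwa [this])
      exact (sub_ne_zero.2 hne).isUnit
    have hXa : LinearMap.ker ((Polynomial.aeval f) (X - C (c a)))
        = LinearMap.ker (f - c a • 1) := by
      have h1 : (Polynomial.aeval f) (X - C (c a)) = f - c a • 1 := by
        rw [map_sub, aeval_X, aeval_C]
        congr 1
      rw [h1]
    rw [Finset.prod_insert ha, ← Polynomial.sup_ker_aeval_eq_ker_aeval_mul_of_coprime f hcop,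
      ih hc', hXa, Finset.iSup_insert]

end Generic

theorem kernel_of_pmu_decomposes_along_orbit
    (m : ℕ) (hm : 0 < m) (ε : ℂ) (hε : IsPrimitiveRoot ε m) (τ : CGrp m)
    (μ : ℂ) (M : Type*) [AddCommGroup M] [Module (CBH m ε τ)ᵐᵒᵖ M]
    (reps : (muGroup m ⧸ stab m hm ε hε.pow_eq_one μ) → muGroup m)
    (hreps : ∀ q, QuotientGroup.mk (s := stab m hm ε hε.pow_eq_one μ)
        (reps q) = q) :
    (kerOf m ε τ (pmu m ε τ μ) M = ⨆ q, kerTranslate m ε τ μ M (reps q))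
    ∧ (iSupIndep fun q => kerTranslate m ε τ μ M (reps q)) := by
  classical
  haveI : NeZero m := ⟨hm.ne'⟩
  letI : Module ℂ M := Module.compHom M (algebraMap ℂ (CBH m ε τ)ᵐᵒᵖ)
  have hsmul : ∀ (a : ℂ) (v : M),
      a • v = MulOpposite.op (algebraMap ℂ (CBH m ε τ) a) • v := fun a v => by
    rw [← MulOpposite.algebraMap_apply]; rfl
  haveI : NoZeroSMulDivisors ℂ M := ⟨by
    intro a v hav
    by_cases ha : a = 0
    · exact Or.inl ha
    · refine Or.inr ?_
      have := congrArg (fun w => a⁻¹ • w) hav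
      simpa [smul_smul, inv_mul_cancel₀ ha] using this⟩
  set F : M →ₗ[ℂ] M := {
    toFun := fun v => MulOpposite.op (bX m ε τ) • v
    map_add' := fun a b => smul_add _ a b
    map_smul' := fun a v => by
      show MulOpposite.op (bX m ε τ) • (a • v) = a • (MulOpposite.op (bX m ε τ) • v)
      rw [hsmul, hsmul, ← op_mul_smul m ε τ, ← op_mul_smul m ε τ, Algebra.commutes] } with hF
  have hFapp : ∀ v : M, F v = MulOpposite.op (bX m ε τ) • v := fun v => rfl
  have hFpow : ∀ (k : ℕ) (v : M), (F ^ k) v = MulOpposite.op (bX m ε τ ^ k) • v := by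
    intro k
    induction k with
    | zero => intro v; simp
    | succ n ih =>
      intro v
      rw [pow_succ F, Module.End.mul_apply, pow_succ' (bX m ε τ), op_mul_smul m ε τ, ← hFapp,
        ih]
  have hkerlin : ∀ c : ℂ, kerOf m ε τ (bX m ε τ - algebraMap ℂ (CBH m ε τ) c) M
      = (LinearMap.ker (F - c • (1 : Module.End ℂ M))).toAddSubgroup := by
    intro c
    ext v
    show MulOpposite.op (bX m ε τ - algebraMap ℂ (CBH m ε τ) c) • v = 0 ↔ _
    rw [Submodule.mem_toAddSubgroup, LinearMap.mem_ker, LinearMap.sub_apply,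
      LinearMap.smul_apply, Module.End.one_apply, MulOpposite.op_sub, sub_smul, ← hsmul, hFapp]
  have hT : ∀ g : muGroup m, kerTranslate m ε τ μ M g
      = (LinearMap.ker (F - (chi m ε g⁻¹ * μ) • (1 : Module.End ℂ M))).toAddSubgroup := by
    intro g
    rw [kerTranslate_eq m ε τ hm hε.pow_eq_one μ M g, hkerlin]
  -- injectivity of eigenvalues over the quotient
  have hinj : Function.Injective fun q : muGroup m ⧸ stab m hm ε hε.pow_eq_one μ =>
      chi m ε (reps q)⁻¹ * μ := by
    intro a b hab
    simp only at hab
    have hmem : (reps a)⁻¹ * reps b ∈ stab m hm ε hε.pow_eq_one μ := by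
      show chi m ε ((reps a)⁻¹ * reps b) * μ = μ
      rw [chi_mul m hm ε hε.pow_eq_one]
      calc chi m ε (reps a)⁻¹ * chi m ε (reps b) * μ
          = chi m ε (reps b) * (chi m ε (reps a)⁻¹ * μ) := by ring
        _ = chi m ε (reps b) * (chi m ε (reps b)⁻¹ * μ) := by rw [hab]
        _ = chi m ε (reps b) * chi m ε (reps b)⁻¹ * μ := by ring
        _ = μ := by rw [chi_mul_inv m ε hm hε.pow_eq_one, one_mul]
    have := QuotientGroup.eq.2 hmem
    rwa [hreps, hreps] at this
  have hindep : iSupIndep fun q => kerTranslate m ε τ μ M (reps q) := by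
    have h1 : iSupIndep fun q : muGroup m ⧸ stab m hm ε hε.pow_eq_one μ =>
        Module.End.eigenspace F (chi m ε (reps q)⁻¹ * μ) := (Module.End.eigenspaces_iSupIndep F).comp hinj
    have h2 := iSupIndep_toAddSubgroup h1
    have heq : (fun q => kerTranslate m ε τ μ M (reps q))
        = fun q : muGroup m ⧸ stab m hm ε hε.pow_eq_one μ =>
          (Module.End.eigenspace F (chi m ε (reps q)⁻¹ * μ)).toAddSubgroup := by
      funext q
      rw [hT, Module.End.eigenspace_def]
    rw [heq]
    exact h2
  refine ⟨?_, hindep⟩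
  by_cases hμ : μ = 0
  · subst hμ
    haveI : Nonempty (muGroup m ⧸ stab m hm ε hε.pow_eq_one 0) :=
      ⟨QuotientGroup.mk 1⟩
    have hconst : ∀ q : muGroup m ⧸ stab m hm ε hε.pow_eq_one 0,
        kerTranslate m ε τ 0 M (reps q) = kerOf m ε τ (bX m ε τ) M := by
      intro q
      rw [kerTranslate_eq m ε τ hm hε.pow_eq_one 0 M, mul_zero, map_zero, sub_zero]
    rw [iSup_congr hconst, iSup_const]
    simp [pmu]
  · -- μ ≠ 0
    have hrightinv : ∀ g : muGroup m,
        reps (QuotientGroup.mk (s := stab m hm ε hε.pow_eq_one μ) g) = g := by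
      intro g
      have h := hreps (QuotientGroup.mk (s := stab m hm ε hε.pow_eq_one μ) g)
      have hmem := QuotientGroup.eq.1 h
      have hc1 : chi m ε ((reps (QuotientGroup.mk (s := stab m hm ε hε.pow_eq_one μ) g))⁻¹ * g)
          * μ = μ := hmem
      set d := (reps (QuotientGroup.mk (s := stab m hm ε hε.pow_eq_one μ) g))⁻¹ * g with hd
      have hchi : chi m ε d = 1 := by
        have : chi m ε d * μ = 1 * μ := by rw [one_mul]; exact hc1
        exact mul_right_cancel₀ hμ this
      have hdvd : m ∣ (Multiplicative.toAdd d).val := (hε.pow_eq_one_iff_dvd _).1 hchi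
      have hval : (Multiplicative.toAdd d).val = 0 := by
        by_contra hne
        exact absurd (Nat.le_of_dvd (Nat.pos_of_ne_zero hne) hdvd)
          (not_le.2 (ZMod.val_lt _))
      have hd1 : d = 1 := by
        have : Multiplicative.toAdd d = 0 := (ZMod.val_eq_zero _).1 hval
        calc d = Multiplicative.ofAdd (Multiplicative.toAdd d) := rfl
          _ = Multiplicative.ofAdd 0 := by rw [this]
          _ = 1 := ofAdd_zero
      rw [hd] at hd1
      exact (inv_mul_eq_one.1 hd1)
    have hpmu : pmu m ε τ μ = bX m ε τ ^ m - algebraMap ℂ (CBH m ε τ) (μ ^ m) := by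
      simp [pmu, hμ]
    have hkerpow : kerOf m ε τ (bX m ε τ ^ m - algebraMap ℂ (CBH m ε τ) (μ ^ m)) M
        = (LinearMap.ker (Polynomial.aeval F
            (Polynomial.X ^ m - Polynomial.C (μ ^ m)))).toAddSubgroup := by
      ext v
      show MulOpposite.op (bX m ε τ ^ m - algebraMap ℂ (CBH m ε τ) (μ ^ m)) • v = 0 ↔ _
      rw [Submodule.mem_toAddSubgroup, LinearMap.mem_ker, map_sub,
        Polynomial.aeval_X_pow, Polynomial.aeval_C, LinearMap.sub_apply,
        Module.algebraMap_end_apply, MulOpposite.op_sub, sub_smul, ← hsmul, hFpow]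
    have hRHS : (⨆ q, kerTranslate m ε τ μ M (reps q))
        = (⨆ q, LinearMap.ker
            (F - (chi m ε (reps q)⁻¹ * μ) • (1 : Module.End ℂ M))).toAddSubgroup := by
      rw [toAddSubgroup_iSup]
      exact iSup_congr fun q => hT (reps q)
    rw [hRHS, hpmu, hkerpow]
    congr 1
    have hinjOn : Set.InjOn (fun j : ℕ => ε ^ j * μ) (Finset.range m) := by
      intro i hi j hj hij
      simp only [Finset.coe_range, Set.mem_Iio] at hi hj
      exact hε.pow_inj hi hj (mul_right_cancel₀ hμ hij)
    rw [X_pow_sub_C_eq_prod hε hm rfl, ker_aeval_prod F (Finset.range m) _ hinjOn]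
    apply le_antisymm
    · refine iSup₂_le fun j hj => ?_
      set g : muGroup m := Multiplicative.ofAdd ((j : ℕ) : ZMod m) with hg
      have hjm : j < m := Finset.mem_range.1 hj
      have hchig : chi m ε g⁻¹⁻¹ = ε ^ j := by
        rw [inv_inv]
        show ε ^ (Multiplicative.toAdd g).val = ε ^ j
        rw [hg]
        norm_num [ZMod.val_natCast_of_lt hjm]
      have : LinearMap.ker (f := F - (ε ^ j * μ) • (1 : Module.End ℂ M))
          = LinearMap.ker (F - (chi m ε (reps (QuotientGroup.mk
              (s := stab m hm ε hε.pow_eq_one μ) g⁻¹))⁻¹ * μ) • (1 : Module.End ℂ M)) := by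
        rw [hrightinv, hchig]
      rw [this]
      exact le_iSup (fun q => LinearMap.ker
        (F - (chi m ε (reps q)⁻¹ * μ) • (1 : Module.End ℂ M))) _
    · refine iSup_le fun q => ?_
      set g : muGroup m := (reps q)⁻¹ with hg
      have hjm : (Multiplicative.toAdd g).val ∈ Finset.range m :=
        Finset.mem_range.2 (ZMod.val_lt _)
      have hchig : chi m ε g = ε ^ (Multiplicative.toAdd g).val := rfl
      rw [show chi m ε (reps q)⁻¹ = ε ^ (Multiplicative.toAdd g).val from hchig]
      exact le_iSup₂ (f := fun (j : ℕ) (_ : j ∈ Finset.range m) =>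
        LinearMap.ker (F - (ε ^ j * μ) • (1 : Module.End ℂ M)))
        (Multiplicative.toAdd g).val hjm


end
end
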